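/- arXiv:1701.04725 — 12 statements merged into one kernel-verified Lean document; each statement's English description precedes it below -/
import Mathlib

section
/- Let a < b and let g : [a,b] → ℝ be a C², positive-valued, distance-like function satisfying g''(t) ≥ (1 − (g'(t))²)/g(t) for all t ∈ [a,b]. Then for all t₁, t₂ with a ≤ t₁ < t₂ ≤ b and all u ∈ ℝ, v > 0 such that √((u − t₁)² + v²) = g(t₁) and √((u − t₂)² + v²) = g(t₂), one has g(t) ≤ √((u − t)² + v²) for all t ∈ [t₁, t₂]. -/
open Set

theorem euclid_comparison_of_diff_ineq (a b : ℝ) (hab : a < b) (g : ℝ → ℝ)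
    (hC2 : ContDiffOn ℝ 2 g (Icc a b))
    (hpos : ∀ t ∈ Icc a b, 0 < g t)
    (hnonexp : ∀ t₁ ∈ Icc a b, ∀ t₂ ∈ Icc a b, |g t₁ - g t₂| ≤ |t₁ - t₂|)
    (hdistlike : ∀ t₁ ∈ Icc a b, ∀ t₂ ∈ Icc a b, |t₁ - t₂| ≤ g t₁ + g t₂)
    (hineq : ∀ t ∈ Icc a b, (derivWithin (derivWithin g (Icc a b)) (Icc a b)) t ≥ (1 - ((derivWithin g (Icc a b)) t) ^ 2) / g t) :
    ∀ t₁ t₂, a ≤ t₁ → t₁ < t₂ → t₂ ≤ b → ∀ u v : ℝ, 0 < v →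
      Real.sqrt ((u - t₁) ^ 2 + v ^ 2) = g t₁ →
      Real.sqrt ((u - t₂) ^ 2 + v ^ 2) = g t₂ →
      ∀ t ∈ Icc t₁ t₂, g t ≤ Real.sqrt ((u - t) ^ 2 + v ^ 2) := by
  intro t₁ t₂ hat₁ ht₁₂ ht₂b u v hv h1 h2
  set g1 : ℝ → ℝ := derivWithin g (Icc a b) with hg1def
  set g2 : ℝ → ℝ := derivWithin g1 (Icc a b) with hg2def
  have hUD : UniqueDiffOn ℝ (Icc a b) := uniqueDiffOn_Icc hab
  have hgd : DifferentiableOn ℝ g (Icc a b) := hC2.differentiableOn (by norm_num)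
  have hg1c : ContDiffOn ℝ 1 g1 (Icc a b) := hC2.derivWithin hUD (by norm_num)
  have hg1d : DifferentiableOn ℝ g1 (Icc a b) := hg1c.differentiableOn (by norm_num)
  set w : ℝ → ℝ := fun t => g t ^ 2 - ((u - t) ^ 2 + v ^ 2) with hwdef
  set w1 : ℝ → ℝ := fun t => 2 * (g t * g1 t) + 2 * (u - t) with hw1def
  have hint : interior (Icc a b) = Ioo a b := interior_Icc
  -- convexity of w
  have hconv : ConvexOn ℝ (Icc a b) w := by
    apply convexOn_of_hasDerivWithinAt2_nonneg (f' := w1)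
      (f'' := fun t => 2 * (g1 t * g1 t + g t * g2 t) - 2) (convex_Icc a b)
    · exact (hC2.continuousOn.pow 2).sub (Continuous.continuousOn (by continuity))
    · intro x hx
      rw [hint] at hx ⊢
      have hxI : x ∈ Icc a b := Ioo_subset_Icc_self hx
      have hg : HasDerivWithinAt g (g1 x) (Ioo a b) x :=
        ((hgd x hxI).hasDerivWithinAt).mono Ioo_subset_Icc_self
      have hq : HasDerivAt (fun t => (u - t) ^ 2 + v ^ 2)
          (2 * (u - x) ^ 1 * (-1)) x := by
        exact (((hasDerivAt_id x).const_sub u).pow 2).add_const (v ^ 2)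
      have := ((hg.mul hg).const_mul (1 : ℝ)).sub (hq.hasDerivWithinAt (s := Ioo a b))
      convert this using 1
      · rfl
      · rfl
      · funext t; simp [hwdef]; ring
      · simp [hw1def]; ring
    · intro x hx
      rw [hint] at hx ⊢
      have hxI : x ∈ Icc a b := Ioo_subset_Icc_self hx
      have hg : HasDerivWithinAt g (g1 x) (Ioo a b) x :=
        ((hgd x hxI).hasDerivWithinAt).mono Ioo_subset_Icc_self
      have hg1 : HasDerivWithinAt g1 (g2 x) (Ioo a b) x :=
        ((hg1d x hxI).hasDerivWithinAt).mono Ioo_subset_Icc_self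
      have hq : HasDerivAt (fun t => 2 * (u - t)) (2 * (-1)) x :=
        ((hasDerivAt_id x).const_sub u).const_mul 2
      have := ((hg.mul hg1).const_mul (2 : ℝ)).add (hq.hasDerivWithinAt (s := Ioo a b))
      convert this using 1
      · rfl
      · rfl
      · rfl
      ring
    · intro x hx
      rw [hint] at hx
      have hxI : x ∈ Icc a b := Ioo_subset_Icc_self hx
      have hgx : 0 < g x := hpos x hxI
      have h := hineq x hxI
      rw [ge_iff_le, div_le_iff₀ hgx] at h
      nlinarith [h]
  -- endpoints
  have ht₁I : t₁ ∈ Icc a b := ⟨hat₁, le_trans ht₁₂.le ht₂b⟩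
  have ht₂I : t₂ ∈ Icc a b := ⟨le_trans hat₁ ht₁₂.le, ht₂b⟩
  have hw1 : w t₁ = 0 := by
    have : (u - t₁) ^ 2 + v ^ 2 = g t₁ ^ 2 := by
      rw [← h1, Real.sq_sqrt (by positivity)]
    simp [hwdef, this]
  have hw2 : w t₂ = 0 := by
    have : (u - t₂) ^ 2 + v ^ 2 = g t₂ ^ 2 := by
      rw [← h2, Real.sq_sqrt (by positivity)]
    simp [hwdef, this]
  intro t ht
  have htI : t ∈ Icc a b := ⟨le_trans hat₁ ht.1, le_trans ht.2 ht₂b⟩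
  have hseg : t ∈ segment ℝ t₁ t₂ := by
    rw [segment_eq_Icc ht₁₂.le]; exact ht
  have hle : w t ≤ max (w t₁) (w t₂) := hconv.le_on_segment ht₁I ht₂I hseg
  rw [hw1, hw2, max_self] at hle
  have hsq : g t ^ 2 ≤ (u - t) ^ 2 + v ^ 2 := by
    have : w t = g t ^ 2 - ((u - t) ^ 2 + v ^ 2) := rfl
    linarith [hle, this ▸ hle]
  calc g t = Real.sqrt (g t ^ 2) := (Real.sqrt_sq (hpos t htI).le).symm
    _ ≤ Real.sqrt ((u - t) ^ 2 + v ^ 2) := Real.sqrt_le_sqrt hsq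
end

section
/- Let a < b and let g : [a,b] → ℝ be a C², positive-valued, distance-like function. Suppose that for every t₁, t₂ with a ≤ t₁ < t₂ ≤ b there exist u ∈ ℝ and v > 0 with √((u − t₁)² + v²) = g(t₁), √((u − t₂)² + v²) = g(t₂), and g(t) ≤ √((u − t)² + v²) for all t ∈ [t₁, t₂]. Then g''(t) ≥ (1 − (g'(t))²)/g(t) holds for all t ∈ [a,b]. -/
open Set

theorem diff_ineq_of_euclid_comparison (a b : ℝ) (hab : a < b) (g : ℝ → ℝ)
    (hC2 : ContDiffOn ℝ 2 g (Icc a b))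
    (hpos : ∀ t ∈ Icc a b, 0 < g t)
    (hnonexp : ∀ t₁ ∈ Icc a b, ∀ t₂ ∈ Icc a b, |g t₁ - g t₂| ≤ |t₁ - t₂|)
    (hdistlike : ∀ t₁ ∈ Icc a b, ∀ t₂ ∈ Icc a b, |t₁ - t₂| ≤ g t₁ + g t₂)
    (hcmp : ∀ t₁ t₂, a ≤ t₁ → t₁ < t₂ → t₂ ≤ b → ∃ u v : ℝ, 0 < v ∧
      Real.sqrt ((u - t₁) ^ 2 + v ^ 2) = g t₁ ∧
      Real.sqrt ((u - t₂) ^ 2 + v ^ 2) = g t₂ ∧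
      ∀ t ∈ Icc t₁ t₂, g t ≤ Real.sqrt ((u - t) ^ 2 + v ^ 2)) :
    ∀ t ∈ Icc a b, (derivWithin (derivWithin g (Icc a b)) (Icc a b)) t ≥ (1 - ((derivWithin g (Icc a b)) t) ^ 2) / g t := by
  have hs : UniqueDiffOn ℝ (Icc a b) := uniqueDiffOn_Icc hab
  set g1 := derivWithin g (Icc a b) with hg1def
  set g2 := derivWithin g1 (Icc a b) with hg2def
  have hC1 : ContDiffOn ℝ 1 g1 (Icc a b) := hC2.derivWithin hs (by norm_num)
  have hdg : DifferentiableOn ℝ g (Icc a b) := hC2.differentiableOn (by norm_num)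
  have hdg1 : DifferentiableOn ℝ g1 (Icc a b) := hC1.differentiableOn (by norm_num)
  have hcg : ContinuousOn g (Icc a b) := hdg.continuousOn
  have hcg1 : ContinuousOn g1 (Icc a b) := hdg1.continuousOn
  have hcg2 : ContinuousOn g2 (Icc a b) :=
    (hC1.derivWithin (m := 0) hs (by norm_num)).continuousOn
  -- Key claim: g * g'' + (g')² ≥ 1 on [a,b]
  have key : ∀ t ∈ Icc a b, 1 ≤ g t * g2 t + g1 t ^ 2 := by
    intro t₀ ht₀
    by_contra hlt
    push_neg at hlt
    set F : ℝ → ℝ := fun t => g t * g2 t + g1 t ^ 2 with hFdef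
    have hFc : ContinuousOn F (Icc a b) := (hcg.mul hcg2).add (hcg1.pow 2)
    have hev : ∀ᶠ x in nhdsWithin t₀ (Icc a b), F x < 1 :=
      (hFc t₀ ht₀).eventually_lt_const hlt
    rw [Filter.eventually_iff, Metric.mem_nhdsWithin_iff] at hev
    obtain ⟨ε, hε, hball⟩ := hev
    set t₁ := max a (t₀ - ε / 2) with ht₁def
    set t₂ := min b (t₀ + ε / 2) with ht₂def
    have ha₁ : a ≤ t₁ := le_max_left _ _
    have hb₂ : t₂ ≤ b := min_le_left _ _
    have ht₁₂ : t₁ < t₂ := by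
      rw [ht₁def, ht₂def, max_lt_iff, lt_min_iff, lt_min_iff]
      obtain ⟨h1, h2⟩ := ht₀
      refine ⟨⟨hab, by linarith⟩, by linarith, by linarith⟩
    have hsub : ∀ x ∈ Icc t₁ t₂, x ∈ Icc a b :=
      fun x hx => ⟨ha₁.trans hx.1, hx.2.trans hb₂⟩
    have hFlt : ∀ x ∈ Icc t₁ t₂, F x < 1 := by
      intro x hx
      apply hball
      constructor
      · rw [Metric.mem_ball, Real.dist_eq, abs_lt]
        have h1 : t₀ - ε / 2 ≤ t₁ := le_max_right _ _
        have h2 : t₂ ≤ t₀ + ε / 2 := min_le_right _ _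
        obtain ⟨hx1, hx2⟩ := hx
        constructor <;> linarith
      · exact hsub x hx
    obtain ⟨u, v, hv, heq1, heq2, hle⟩ := hcmp t₁ t₂ ha₁ ht₁₂ hb₂
    set φ : ℝ → ℝ := fun t => g t ^ 2 - ((u - t) ^ 2 + v ^ 2) with hφdef
    set P : ℝ → ℝ := fun t => 2 * g t * g1 t + 2 * (u - t) with hPdef
    have hφt₁ : φ t₁ = 0 := by
      have : g t₁ ^ 2 = (u - t₁) ^ 2 + v ^ 2 := by
        rw [← heq1, Real.sq_sqrt (by positivity)]
      simp [hφdef, this]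
    have hφt₂ : φ t₂ = 0 := by
      have : g t₂ ^ 2 = (u - t₂) ^ 2 + v ^ 2 := by
        rw [← heq2, Real.sq_sqrt (by positivity)]
      simp [hφdef, this]
    have hφle : ∀ t ∈ Icc t₁ t₂, φ t ≤ 0 := by
      intro t ht
      have h1 : g t ^ 2 ≤ Real.sqrt ((u - t) ^ 2 + v ^ 2) ^ 2 :=
        pow_le_pow_left₀ (hpos t (hsub t ht)).le (hle t ht) 2
      rw [Real.sq_sqrt (by positivity)] at h1
      simp only [hφdef]
      linarith
    -- derivative of φ within Icc a b is P
    have hderφ : ∀ x ∈ Icc a b, HasDerivWithinAt φ (P x) (Icc a b) x := by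
      intro x hx
      have hg' : HasDerivWithinAt g (g1 x) (Icc a b) x := (hdg x hx).hasDerivWithinAt
      have h1 : HasDerivWithinAt (fun t => g t ^ 2) (2 * g x * g1 x) (Icc a b) x := by
        have := hg'.pow 2
        exact this.congr_deriv (by norm_num)
      have h2 : HasDerivWithinAt (fun t => (u - t) ^ 2 + v ^ 2) (-(2 * (u - x)))
          (Icc a b) x := by
        have := (((hasDerivWithinAt_const x (Icc a b) u).sub
          (hasDerivWithinAt_id x (Icc a b))).pow 2).add_const (v ^ 2)
        exact this.congr_deriv (by simp)
      have := h1.sub h2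
      exact this.congr_deriv (by simp only [hPdef]; ring)
    -- on Ioo t₁ t₂ everything is a full derivative
    have hmemnhds : ∀ x ∈ Ioo t₁ t₂, Icc a b ∈ nhds x := by
      intro x hx
      exact Icc_mem_nhds (lt_of_le_of_lt ha₁ hx.1) (lt_of_lt_of_le hx.2 hb₂)
    have hderφ' : ∀ x ∈ Ioo t₁ t₂, HasDerivAt φ (P x) x := by
      intro x hx
      exact (hderφ x (hsub x (Ioo_subset_Icc_self hx))).hasDerivAt (hmemnhds x hx)
    have hderP : ∀ x ∈ Ioo t₁ t₂, HasDerivAt P (2 * F x - 2) x := by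
      intro x hx
      have hxs : x ∈ Icc a b := hsub x (Ioo_subset_Icc_self hx)
      have hg' : HasDerivAt g (g1 x) x :=
        (hdg x hxs).hasDerivWithinAt.hasDerivAt (hmemnhds x hx)
      have hg1' : HasDerivAt g1 (g2 x) x :=
        (hdg1 x hxs).hasDerivWithinAt.hasDerivAt (hmemnhds x hx)
      have h1 : HasDerivAt (fun t => 2 * g t * g1 t)
          (2 * g1 x * g1 x + 2 * g x * g2 x) x := by
        have := (hg'.const_mul 2).mul hg1'
        exact this
      have h2 : HasDerivAt (fun t => 2 * (u - t)) (-2) x := by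
        have := ((hasDerivAt_const x u).sub (hasDerivAt_id x)).const_mul 2
        exact this.congr_deriv (by norm_num)
      have := h1.add h2
      exact this.congr_deriv (by simp only [hFdef]; ring)
    -- P is strictly decreasing on [t₁, t₂]
    have hPanti : StrictAntiOn P (Icc t₁ t₂) := by
      apply strictAntiOn_of_deriv_neg (convex_Icc t₁ t₂)
      · exact ((continuousOn_const.mul (hcg.mono hsub)).mul (hcg1.mono hsub)).add
          (continuousOn_const.mul (continuousOn_const.sub continuousOn_id))
      · intro x hx
        rw [interior_Icc] at hx
        rw [(hderP x hx).deriv]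
        have := hFlt x (Ioo_subset_Icc_self hx)
        linarith
    -- φ continuous on [t₁, t₂]
    have hφc : ContinuousOn φ (Icc t₁ t₂) := by
      apply ((hcg.mono hsub).pow 2).sub
      fun_prop
    -- Mean value theorem: ∃ c, P c = 0
    obtain ⟨c, hc, hPc⟩ := exists_hasDerivAt_eq_slope φ P ht₁₂ hφc hderφ'
    rw [hφt₁, hφt₂] at hPc
    simp at hPc
    -- second MVT on [c, t₂]
    obtain ⟨d, hd, hPd⟩ := exists_hasDerivAt_eq_slope φ P hc.2
      (hφc.mono (Icc_subset_Icc hc.1.le le_rfl))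
      (fun x hx => hderφ' x ⟨hc.1.trans hx.1, hx.2⟩)
    have hPd0 : 0 ≤ P d := by
      rw [hPd, hφt₂]
      apply div_nonneg
      · have := hφle c (Ioo_subset_Icc_self hc)
        linarith
      · linarith [hc.2]
    have hPdc : P d < P c :=
      hPanti (Ioo_subset_Icc_self hc) ⟨hc.1.le.trans hd.1.le, hd.2.le⟩ hd.1
    rw [hPc] at hPdc
    linarith
  intro t ht
  rw [ge_iff_le, div_le_iff₀ (hpos t ht)]
  have := key t ht
  nlinarith
end

section
/- Let a < b and let g : [a,b] → ℝ be a C², positive-valued, distance-like function satisfying g''(t) ≤ (1 − (g'(t))²)/g(t) for all t ∈ [a,b]. Then for all t₁, t₂ with a ≤ t₁ < t₂ ≤ b and all u ∈ ℝ, v > 0 such that √((u − t₁)² + v²) = g(t₁) and √((u − t₂)² + v²) = g(t₂), one has g(t) ≥ √((u − t)² + v²) for all t ∈ [t₁, t₂]. -/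
open Set

theorem euclid_comparison_of_diff_ineq_rev (a b : ℝ) (hab : a < b) (g : ℝ → ℝ)
    (hC2 : ContDiffOn ℝ 2 g (Icc a b))
    (hpos : ∀ t ∈ Icc a b, 0 < g t)
    (hnonexp : ∀ t₁ ∈ Icc a b, ∀ t₂ ∈ Icc a b, |g t₁ - g t₂| ≤ |t₁ - t₂|)
    (hdistlike : ∀ t₁ ∈ Icc a b, ∀ t₂ ∈ Icc a b, |t₁ - t₂| ≤ g t₁ + g t₂)
    (hineq : ∀ t ∈ Icc a b, (derivWithin (derivWithin g (Icc a b)) (Icc a b)) t ≤ (1 - ((derivWithin g (Icc a b)) t) ^ 2) / g t) :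
    ∀ t₁ t₂, a ≤ t₁ → t₁ < t₂ → t₂ ≤ b → ∀ u v : ℝ, 0 < v →
      Real.sqrt ((u - t₁) ^ 2 + v ^ 2) = g t₁ →
      Real.sqrt ((u - t₂) ^ 2 + v ^ 2) = g t₂ →
      ∀ t ∈ Icc t₁ t₂, g t ≥ Real.sqrt ((u - t) ^ 2 + v ^ 2) := by
  intro t₁ t₂ hat₁ ht₁₂ ht₂b u v hv e₁ e₂ t ht
  set S := Icc a b with hSdef
  have hS : UniqueDiffOn ℝ S := uniqueDiffOn_Icc hab
  set g1 := derivWithin g S with hg1def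
  set g2 := derivWithin g1 S with hg2def
  have hdm : ∀ x ∈ S, HasDerivWithinAt g (g1 x) S x := fun x hx =>
    ((hC2.differentiableOn two_ne_zero) x hx).hasDerivWithinAt
  have hC1 : ContDiffOn ℝ 1 g1 S := hC2.derivWithin hS (by norm_num)
  have hdm2 : ∀ x ∈ S, HasDerivWithinAt g1 (g2 x) S x := fun x hx =>
    ((hC1.differentiableOn one_ne_zero) x hx).hasDerivWithinAt
  set φ : ℝ → ℝ := fun x => g x ^ 2 - ((u - x) ^ 2 + v ^ 2) with hφdef
  have hIoo : interior S ⊆ S := interior_subset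
  have hconc : ConcaveOn ℝ S φ := by
    apply concaveOn_of_hasDerivWithinAt2_nonpos (f' := fun x => 2 * g x * g1 x + 2 * (u - x))
      (f'' := fun x => 2 * (g1 x) ^ 2 + 2 * g x * g2 x - 2) (convex_Icc a b)
    · exact ((hC2.continuousOn.pow 2).sub (Continuous.continuousOn (by continuity)))
    · intro x hx
      have h1 : HasDerivWithinAt (fun y => g y ^ 2) (2 * g x ^ 1 * g1 x) (interior S) x :=
        ((hdm x (hIoo hx)).mono hIoo).pow 2
      have h2 : HasDerivWithinAt (fun y => (u - y) ^ 2 + v ^ 2)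
          (2 * (u - x) ^ 1 * (-1)) (interior S) x := by
        exact (((hasDerivAt_id x).const_sub u).pow 2).hasDerivWithinAt.add_const _
      have := h1.sub h2
      exact this.congr_deriv (by ring)
    · intro x hx
      have h1 : HasDerivWithinAt (fun y => 2 * g y * g1 y)
          (2 * g1 x * g1 x + 2 * g x * g2 x) (interior S) x := by
        exact (((hdm x (hIoo hx)).mono hIoo).const_mul 2).mul ((hdm2 x (hIoo hx)).mono hIoo)
      have h2 : HasDerivWithinAt (fun y => 2 * (u - y)) (-2 : ℝ) (interior S) x := by
        have := (((hasDerivAt_id x).const_sub u).const_mul 2).hasDerivWithinAt (s := interior S)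
        simpa using this
      have := h1.add h2
      exact this.congr_deriv (by ring)
    · intro x hx
      have hxS : x ∈ S := hIoo hx
      have hgx : 0 < g x := hpos x hxS
      have h := hineq x hxS
      rw [le_div_iff₀ hgx] at h
      nlinarith
  have ht₁S : t₁ ∈ S := ⟨hat₁, le_trans ht₁₂.le ht₂b⟩
  have ht₂S : t₂ ∈ S := ⟨le_trans hat₁ ht₁₂.le, ht₂b⟩
  have hφ₁ : φ t₁ = 0 := by
    have hA : (0:ℝ) ≤ (u - t₁) ^ 2 + v ^ 2 := by positivity
    have := Real.sq_sqrt hA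
    rw [e₁] at this
    simp [hφdef, this]
  have hφ₂ : φ t₂ = 0 := by
    have hA : (0:ℝ) ≤ (u - t₂) ^ 2 + v ^ 2 := by positivity
    have := Real.sq_sqrt hA
    rw [e₂] at this
    simp [hφdef, this]
  have hseg : t ∈ segment ℝ t₁ t₂ := by
    rw [segment_eq_Icc ht₁₂.le]; exact ht
  have hmin := hconc.ge_on_segment ht₁S ht₂S hseg
  rw [hφ₁, hφ₂, min_self] at hmin
  have htS : t ∈ S := ⟨le_trans hat₁ ht.1, le_trans ht.2 ht₂b⟩
  have hle : (u - t) ^ 2 + v ^ 2 ≤ g t ^ 2 := by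
    have : 0 ≤ g t ^ 2 - ((u - t) ^ 2 + v ^ 2) := hmin
    linarith
  calc Real.sqrt ((u - t) ^ 2 + v ^ 2) ≤ Real.sqrt (g t ^ 2) := Real.sqrt_le_sqrt hle
    _ = g t := Real.sqrt_sq (hpos t htS).le
end

section
/- Let a < b and let g : [a,b] → ℝ be a C², positive-valued, distance-like function. Suppose that for every t₁, t₂ with a ≤ t₁ < t₂ ≤ b there exist u ∈ ℝ and v > 0 with √((u − t₁)² + v²) = g(t₁), √((u − t₂)² + v²) = g(t₂), and g(t) ≥ √((u − t)² + v²) for all t ∈ [t₁, t₂]. Then g''(t) ≤ (1 − (g'(t))²)/g(t) holds for all t ∈ [a,b]. -/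
open Set

private lemma anti_deriv_nonpos {a b : ℝ} {φ : ℝ → ℝ} {φ' x : ℝ}
    (hab : a < b) (hx : x ∈ Icc a b) (hanti : AntitoneOn φ (Icc a b))
    (hd : HasDerivWithinAt φ φ' (Icc a b) x) : φ' ≤ 0 := by
  have ht := hasDerivWithinAt_iff_tendsto_slope.1 hd
  rcases lt_or_ge x b with hxb | hxb
  · have hsub : Ioo x b ⊆ Icc a b \ {x} := fun y hy =>
      ⟨⟨hx.1.trans hy.1.le, hy.2.le⟩, hy.1.ne'⟩
    have hmono : Filter.Tendsto (slope φ x) (nhdsWithin x (Ioo x b)) (nhds φ') :=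
      ht.mono_left (nhdsWithin_mono x hsub)
    have hne : (nhdsWithin x (Ioo x b)).NeBot := left_nhdsWithin_Ioo_neBot hxb
    refine le_of_tendsto hmono (Filter.eventually_of_mem self_mem_nhdsWithin ?_)
    intro y hy
    have h1 : φ y ≤ φ x := hanti hx ⟨hx.1.trans hy.1.le, hy.2.le⟩ hy.1.le
    rw [slope_def_field]
    apply div_nonpos_of_nonpos_of_nonneg <;> linarith [hy.1]
  · have hax : a < x := lt_of_lt_of_le hab hxb
    have hsub : Ioo a x ⊆ Icc a b \ {x} := fun y hy =>
      ⟨⟨hy.1.le, hy.2.le.trans hx.2⟩, hy.2.ne⟩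
    have hmono : Filter.Tendsto (slope φ x) (nhdsWithin x (Ioo a x)) (nhds φ') :=
      ht.mono_left (nhdsWithin_mono x hsub)
    have hne : (nhdsWithin x (Ioo a x)).NeBot := right_nhdsWithin_Ioo_neBot hax
    refine le_of_tendsto hmono (Filter.eventually_of_mem self_mem_nhdsWithin ?_)
    intro y hy
    have h1 : φ x ≤ φ y := hanti ⟨hy.1.le, hy.2.le.trans hx.2⟩ hx hy.2.le
    rw [slope_def_field]
    apply div_nonpos_of_nonneg_of_nonpos <;> linarith [hy.2]

theorem diff_ineq_rev_of_euclid_comparison (a b : ℝ) (hab : a < b) (g : ℝ → ℝ)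
    (hC2 : ContDiffOn ℝ 2 g (Icc a b))
    (hpos : ∀ t ∈ Icc a b, 0 < g t)
    (hnonexp : ∀ t₁ ∈ Icc a b, ∀ t₂ ∈ Icc a b, |g t₁ - g t₂| ≤ |t₁ - t₂|)
    (hdistlike : ∀ t₁ ∈ Icc a b, ∀ t₂ ∈ Icc a b, |t₁ - t₂| ≤ g t₁ + g t₂)
    (hcmp : ∀ t₁ t₂, a ≤ t₁ → t₁ < t₂ → t₂ ≤ b → ∃ u v : ℝ, 0 < v ∧
      Real.sqrt ((u - t₁) ^ 2 + v ^ 2) = g t₁ ∧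
      Real.sqrt ((u - t₂) ^ 2 + v ^ 2) = g t₂ ∧
      ∀ t ∈ Icc t₁ t₂, g t ≥ Real.sqrt ((u - t) ^ 2 + v ^ 2)) :
    ∀ t ∈ Icc a b, (derivWithin (derivWithin g (Icc a b)) (Icc a b)) t ≤ (1 - ((derivWithin g (Icc a b)) t) ^ 2) / g t := by
  intro t₀ ht₀
  set s := Icc a b with hsdef
  have hs : UniqueDiffOn ℝ s := uniqueDiffOn_Icc hab
  set g' := derivWithin g s with hg'def
  set g'' := derivWithin g' s with hg''def
  have hgd : DifferentiableOn ℝ g s := hC2.differentiableOn (by norm_num)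
  have hg'C1 : ContDiffOn ℝ 1 g' s := hC2.derivWithin hs (by norm_num)
  have hg'd : DifferentiableOn ℝ g' s := hg'C1.differentiableOn (by norm_num)
  -- key inequality: chord condition for h t = g t ^ 2 - t ^ 2
  have key : ∀ x ∈ s, ∀ y ∈ s, x < y → ∀ p q : ℝ, 0 ≤ p → 0 ≤ q → p + q = 1 →
      p * (g x ^ 2 - x ^ 2) + q * (g y ^ 2 - y ^ 2) ≤
        g (p * x + q * y) ^ 2 - (p * x + q * y) ^ 2 := by
    intro x hx y hy hxy p q hp hq hpq
    obtain ⟨u, v, hv, hgx, hgy, hge⟩ := hcmp x y hx.1 hxy hy.2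
    have hx2 : g x ^ 2 = (u - x) ^ 2 + v ^ 2 := by
      rw [← hgx, Real.sq_sqrt (by positivity)]
    have hy2 : g y ^ 2 = (u - y) ^ 2 + v ^ 2 := by
      rw [← hgy, Real.sq_sqrt (by positivity)]
    have hz1 : x ≤ p * x + q * y := by
      have e : p * x + q * y - x = q * (y - x) := by linear_combination x * hpq
      have h := mul_nonneg hq (show (0:ℝ) ≤ y - x by linarith)
      linarith
    have hz2 : p * x + q * y ≤ y := by
      have e : y - (p * x + q * y) = p * (y - x) := by linear_combination (-y) * hpq
      have h := mul_nonneg hp (show (0:ℝ) ≤ y - x by linarith)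
      linarith
    have hgz := hge (p * x + q * y) ⟨hz1, hz2⟩
    have hz3 : (u - (p * x + q * y)) ^ 2 + v ^ 2 ≤ g (p * x + q * y) ^ 2 := by
      nlinarith [Real.sq_sqrt (show (0:ℝ) ≤ (u - (p * x + q * y)) ^ 2 + v ^ 2 by positivity),
        Real.sqrt_nonneg ((u - (p * x + q * y)) ^ 2 + v ^ 2)]
    have h4 : p * (g x ^ 2 - x ^ 2) + q * (g y ^ 2 - y ^ 2)
        = u ^ 2 + v ^ 2 - 2 * u * (p * x + q * y) := by
      linear_combination p * hx2 + q * hy2 + (u ^ 2 + v ^ 2) * hpq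
    have e : (u - (p * x + q * y)) ^ 2 + v ^ 2
        = u ^ 2 + v ^ 2 - 2 * u * (p * x + q * y) + (p * x + q * y) ^ 2 := by ring
    rw [h4]
    linarith [hz3]
  have hconc : ConcaveOn ℝ s (fun t => g t ^ 2 - t ^ 2) := by
    refine ⟨convex_Icc a b, ?_⟩
    intro x hx y hy p q hp hq hpq
    simp only [smul_eq_mul]
    rcases lt_trichotomy x y with hxy | rfl | hxy
    · exact key x hx y hy hxy p q hp hq hpq
    · have e : p * x + q * x = x := by linear_combination x * hpq
      rw [e]
      linear_combination (g x ^ 2 - x ^ 2) * hpq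
    · have hkey := key y hy x hx hxy q p hq hp (by linarith)
      have e : p * x + q * y = q * y + p * x := by ring
      rw [e]
      linarith
  have hder : ∀ t ∈ s, HasDerivWithinAt (fun t => g t ^ 2 - t ^ 2)
      (2 * (g t * g' t - t)) s t := by
    intro t ht
    have h1 : HasDerivWithinAt g (g' t) s t := (hgd t ht).hasDerivWithinAt
    have h2 := (h1.pow 2).sub ((hasDerivWithinAt_id t s).pow 2)
    refine HasDerivWithinAt.congr_deriv h2 ?_
    simp
    ring
  have hdiffh : DifferentiableOn ℝ (fun t => g t ^ 2 - t ^ 2) s :=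
    fun t ht => (hder t ht).differentiableWithinAt
  have hanti := hconc.antitoneOn_derivWithin hdiffh
  have heq : ∀ t ∈ s, derivWithin (fun t => g t ^ 2 - t ^ 2) s t = 2 * (g t * g' t - t) :=
    fun t ht => (hder t ht).derivWithin (hs t ht)
  have hanti2 : AntitoneOn (fun t => 2 * (g t * g' t - t)) s := by
    intro x hx y hy hxy
    show 2 * (g y * g' y - y) ≤ 2 * (g x * g' x - x)
    rw [← heq x hx, ← heq y hy]
    exact hanti hx hy hxy
  -- derivative of the antitone function at t₀
  have h1 : HasDerivWithinAt g (g' t₀) s t₀ := (hgd t₀ ht₀).hasDerivWithinAt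
  have h2 : HasDerivWithinAt g' (g'' t₀) s t₀ := (hg'd t₀ ht₀).hasDerivWithinAt
  have h3 : HasDerivWithinAt (fun t => 2 * (g t * g' t - t))
      (2 * (g' t₀ * g' t₀ + g t₀ * g'' t₀ - 1)) s t₀ := by
    have := ((h1.mul h2).sub (hasDerivWithinAt_id t₀ s)).const_mul (2 : ℝ)
    exact this
  have hnp : 2 * (g' t₀ * g' t₀ + g t₀ * g'' t₀ - 1) ≤ 0 :=
    anti_deriv_nonpos hab ht₀ hanti2 h3
  have hg0 : 0 < g t₀ := hpos t₀ ht₀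
  rw [le_div_iff₀ hg0]
  nlinarith
end

section
/- Let k < 0, u ∈ ℝ, v > 0, and define g_k : ℝ → ℝ by g_k(t) = (1/√(−k)) · arcosh( ((u² + v²) e^{−√(−k) t} + e^{√(−k) t}) / (2v) ). Then at every t ∈ ℝ at which ((u² + v²) e^{−√(−k) t} + e^{√(−k) t}) / (2v) > 1 (equivalently g_k(t) > 0), the function g_k is twice differentiable and satisfies g_k''(t) = √(−k) · (1 − (g_k'(t))²) · coth(√(−k) · g_k(t)). -/
noncomputable def arcosh (x : ℝ) : ℝ := Real.log (x + Real.sqrt (x ^ 2 - 1))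

noncomputable def coth (x : ℝ) : ℝ := Real.cosh x / Real.sinh x

/-- The hyperbolic comparison function. -/
noncomputable def gHyp (k u v t : ℝ) : ℝ :=
  (1 / Real.sqrt (-k)) *
    arcosh (((u ^ 2 + v ^ 2) * Real.exp (-(Real.sqrt (-k)) * t) +
      Real.exp (Real.sqrt (-k) * t)) / (2 * v))

noncomputable def Fc (s u v t : ℝ) : ℝ :=
  ((u ^ 2 + v ^ 2) * Real.exp (-(s) * t) + Real.exp (s * t)) / (2 * v)

noncomputable def Fc' (s u v t : ℝ) : ℝ :=
  ((u ^ 2 + v ^ 2) * (Real.exp (-(s) * t) * (-s)) + Real.exp (s * t) * s) / (2 * v)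

noncomputable def Gc (s u v t : ℝ) : ℝ :=
  Fc' s u v t / (s * Real.sqrt ((Fc s u v t) ^ 2 - 1))

lemma hasDerivAt_Fc (s u v x : ℝ) : HasDerivAt (Fc s u v) (Fc' s u v x) x := by
  have e1 : HasDerivAt (fun y : ℝ => Real.exp (-(s) * y)) (Real.exp (-(s) * x) * (-s * 1)) x :=
    ((hasDerivAt_id x).const_mul (-s)).exp
  have e2 : HasDerivAt (fun y : ℝ => Real.exp (s * y)) (Real.exp (s * x) * (s * 1)) x :=
    ((hasDerivAt_id x).const_mul s).exp
  have h := ((e1.const_mul (u ^ 2 + v ^ 2)).add e2).div_const (2 * v)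
  have heq : ((u ^ 2 + v ^ 2) * (Real.exp (-(s) * x) * (-s * 1)) + Real.exp (s * x) * (s * 1))
      / (2 * v) = Fc' s u v x := by
    rw [Fc']; ring
  rw [heq] at h
  exact h

lemma hasDerivAt_Fc' (s u v x : ℝ) : HasDerivAt (Fc' s u v) (s ^ 2 * Fc s u v x) x := by
  have e1 : HasDerivAt (fun y : ℝ => Real.exp (-(s) * y)) (Real.exp (-(s) * x) * (-s * 1)) x :=
    ((hasDerivAt_id x).const_mul (-s)).exp
  have e2 : HasDerivAt (fun y : ℝ => Real.exp (s * y)) (Real.exp (s * x) * (s * 1)) x :=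
    ((hasDerivAt_id x).const_mul s).exp
  have h := (((e1.mul_const (-s)).const_mul (u ^ 2 + v ^ 2)).add (e2.mul_const s)).div_const (2 * v)
  have hfun : Fc' s u v = fun y =>
      ((u ^ 2 + v ^ 2) * (Real.exp (-(s) * y) * (-s)) + Real.exp (s * y) * s) / (2 * v) := rfl
  rw [hfun]
  refine h.congr_deriv ?_
  rw [Fc]; ring

lemma arcosh_hasDerivAt {x : ℝ} (hx : 1 < x) :
    HasDerivAt arcosh (1 / Real.sqrt (x ^ 2 - 1)) x := by
  have hx2 : (0:ℝ) < x ^ 2 - 1 := by nlinarith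
  have hw : 0 < Real.sqrt (x ^ 2 - 1) := Real.sqrt_pos.2 hx2
  have hw2 : Real.sqrt (x ^ 2 - 1) ^ 2 = x ^ 2 - 1 := Real.sq_sqrt hx2.le
  have h1 : HasDerivAt (fun y : ℝ => y ^ 2 - 1) (2 * x ^ 1 * 1) x :=
    (((hasDerivAt_id x).pow 2).sub_const 1)
  have h2 := h1.sqrt (ne_of_gt hx2)
  have h3 := (hasDerivAt_id x).add h2
  have h4 := h3.log (by positivity : x + Real.sqrt (x ^ 2 - 1) ≠ 0)
  have heq : (1 + 2 * x ^ 1 * 1 / (2 * Real.sqrt (x ^ 2 - 1))) / (x + Real.sqrt (x ^ 2 - 1))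
      = 1 / Real.sqrt (x ^ 2 - 1) := by
    field_simp
    nlinarith [hw2]
  simp only [Pi.add_apply, id_eq] at h4
  rw [heq] at h4
  exact h4

lemma cosh_arcosh {x : ℝ} (hx : 1 < x) : Real.cosh (arcosh x) = x := by
  have hx2 : (0:ℝ) ≤ x ^ 2 - 1 := by nlinarith
  have hw2 : Real.sqrt (x ^ 2 - 1) ^ 2 = x ^ 2 - 1 := Real.sq_sqrt hx2
  have hw : 0 ≤ Real.sqrt (x ^ 2 - 1) := Real.sqrt_nonneg _
  have hy : 0 < x + Real.sqrt (x ^ 2 - 1) := by linarith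
  have hinv : (x + Real.sqrt (x ^ 2 - 1))⁻¹ = x - Real.sqrt (x ^ 2 - 1) :=
    inv_eq_of_mul_eq_one_right (by nlinarith [hw2])
  rw [arcosh, Real.cosh_eq, Real.exp_log hy, Real.exp_neg, Real.exp_log hy, hinv]
  ring

lemma sinh_arcosh {x : ℝ} (hx : 1 < x) :
    Real.sinh (arcosh x) = Real.sqrt (x ^ 2 - 1) := by
  have hx2 : (0:ℝ) ≤ x ^ 2 - 1 := by nlinarith
  have hw2 : Real.sqrt (x ^ 2 - 1) ^ 2 = x ^ 2 - 1 := Real.sq_sqrt hx2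
  have hw : 0 ≤ Real.sqrt (x ^ 2 - 1) := Real.sqrt_nonneg _
  have hy : 0 < x + Real.sqrt (x ^ 2 - 1) := by linarith
  have hinv : (x + Real.sqrt (x ^ 2 - 1))⁻¹ = x - Real.sqrt (x ^ 2 - 1) :=
    inv_eq_of_mul_eq_one_right (by nlinarith [hw2])
  rw [arcosh, Real.sinh_eq, Real.exp_log hy, Real.exp_neg, Real.exp_log hy, hinv]
  ring

lemma hasDerivAt_g {s u v x : ℝ} (hs : s ≠ 0) (hx : 1 < Fc s u v x) :
    HasDerivAt (fun t => (1 / s) * arcosh (Fc s u v t)) (Gc s u v x) x := by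
  have h := ((arcosh_hasDerivAt hx).comp x (hasDerivAt_Fc s u v x)).const_mul (1 / s)
  have hx2 : (0:ℝ) < (Fc s u v x) ^ 2 - 1 := by nlinarith
  have hw : Real.sqrt ((Fc s u v x) ^ 2 - 1) ≠ 0 := by positivity
  have heq : 1 / s * (1 / Real.sqrt ((Fc s u v x) ^ 2 - 1) * Fc' s u v x) = Gc s u v x := by
    rw [Gc]; field_simp
  rwa [heq] at h

lemma hasDerivAt_Gc {s u v x : ℝ} (hs : 0 < s) (hx : 1 < Fc s u v x) :
    HasDerivAt (Gc s u v)
      (s * (1 - (Gc s u v x) ^ 2) * (Fc s u v x / Real.sqrt ((Fc s u v x) ^ 2 - 1))) x := by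
  have hx2 : (0:ℝ) < (Fc s u v x) ^ 2 - 1 := by nlinarith
  have hw : 0 < Real.sqrt ((Fc s u v x) ^ 2 - 1) := Real.sqrt_pos.2 hx2
  have h1 : HasDerivAt (fun y => (Fc s u v y) ^ 2 - 1)
      (2 * (Fc s u v x) ^ 1 * Fc' s u v x) x := ((hasDerivAt_Fc s u v x).pow 2).sub_const 1
  have h2 := (h1.sqrt (ne_of_gt hx2)).const_mul s
  have hD : s * Real.sqrt ((Fc s u v x) ^ 2 - 1) ≠ 0 := by positivity
  have h3 := (hasDerivAt_Fc' s u v x).div h2 hD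
  have heq : (s ^ 2 * Fc s u v x * (s * Real.sqrt ((Fc s u v x) ^ 2 - 1)) -
      Fc' s u v x * (s * (2 * (Fc s u v x) ^ 1 * Fc' s u v x /
        (2 * Real.sqrt ((Fc s u v x) ^ 2 - 1))))) /
      (s * Real.sqrt ((Fc s u v x) ^ 2 - 1)) ^ 2
      = s * (1 - (Gc s u v x) ^ 2) * (Fc s u v x / Real.sqrt ((Fc s u v x) ^ 2 - 1)) := by
    rw [Gc]
    field_simp
  rw [heq] at h3
  exact h3

/-- For `k < 0`, at every point where the argument of `arcosh` exceeds `1`, the hyperbolic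
comparison function is twice differentiable and satisfies
`g_k'' = √(-k) (1 - (g_k')²) coth(√(-k) g_k)`. -/
theorem hyperbolic_comparison_ode (k u v : ℝ) (hk : k < 0) (hv : 0 < v) (t : ℝ)
    (hgt : 1 < ((u ^ 2 + v ^ 2) * Real.exp (-(Real.sqrt (-k)) * t) +
      Real.exp (Real.sqrt (-k) * t)) / (2 * v)) :
    DifferentiableAt ℝ (gHyp k u v) t ∧ DifferentiableAt ℝ (deriv (gHyp k u v)) t ∧
      deriv (deriv (gHyp k u v)) t =
        Real.sqrt (-k) * (1 - (deriv (gHyp k u v) t) ^ 2) *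
          coth (Real.sqrt (-k) * gHyp k u v t) := by
  set s := Real.sqrt (-k) with hsdef
  have hs : 0 < s := Real.sqrt_pos.2 (by linarith)
  have hgfun : gHyp k u v = fun t => (1 / s) * arcosh (Fc s u v t) := rfl
  have hgt' : 1 < Fc s u v t := hgt
  have hFcont : Continuous (Fc s u v) := by
    unfold Fc; fun_prop
  have hU : ∀ᶠ x in nhds t, 1 < Fc s u v x :=
    hFcont.continuousAt.eventually (eventually_gt_nhds hgt')
  have hderiv : deriv (gHyp k u v) =ᶠ[nhds t] Gc s u v := by
    filter_upwards [hU] with x hx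
    rw [hgfun]
    exact (hasDerivAt_g hs.ne' hx).deriv
  have hG := hasDerivAt_Gc hs hgt'
  have hd : deriv (gHyp k u v) t = Gc s u v t := by
    rw [hgfun]; exact (hasDerivAt_g hs.ne' hgt').deriv
  refine ⟨?_, ?_, ?_⟩
  · rw [hgfun]; exact (hasDerivAt_g hs.ne' hgt').differentiableAt
  · exact hG.differentiableAt.congr_of_eventuallyEq hderiv
  · rw [hderiv.deriv_eq, hG.deriv, hd]
    have hsg : s * gHyp k u v t = arcosh (Fc s u v t) := by
      rw [hgfun]
      field_simp
    rw [hsg, coth, cosh_arcosh hgt', sinh_arcosh hgt']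
end

section
/- Let k > 0 and let u, v ∈ ℝ satisfy u² + v² < 1/k. Define g_k : ℝ → ℝ by g_k(t) = (1/√k) · arccos( √k (u cos(√k t) + v sin(√k t)) ). Then for every t ∈ ℝ, g_k is twice differentiable at t and satisfies g_k''(t) = √k · (1 − (g_k'(t))²) · cot(√k · g_k(t)). -/
/-- The spherical comparison function. -/
noncomputable def gSph (k u v t : ℝ) : ℝ :=
  (1 / Real.sqrt k) *
    Real.arccos (Real.sqrt k * (u * Real.cos (Real.sqrt k * t) + v * Real.sin (Real.sqrt k * t)))

/-- For `k > 0` and `u² + v² < 1/k`, the spherical comparison function is twice differentiable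
everywhere and satisfies `g_k'' = √k (1 - (g_k')²) cot(√k g_k)`. -/
theorem spherical_comparison_ode (k u v : ℝ) (hk : 0 < k) (huv : u ^ 2 + v ^ 2 < 1 / k) :
    ∀ t : ℝ, DifferentiableAt ℝ (gSph k u v) t ∧ DifferentiableAt ℝ (deriv (gSph k u v)) t ∧
      deriv (deriv (gSph k u v)) t =
        Real.sqrt k * (1 - (deriv (gSph k u v) t) ^ 2) *
          Real.cot (Real.sqrt k * gSph k u v t) := by
  set s := Real.sqrt k with hs
  have hs0 : 0 < s := Real.sqrt_pos.mpr hk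
  have hs2 : s ^ 2 = k := Real.sq_sqrt hk.le
  set w : ℝ → ℝ := fun x => s * (u * Real.cos (s * x) + v * Real.sin (s * x)) with hWdef
  set A : ℝ → ℝ := fun x => -u * Real.sin (s * x) + v * Real.cos (s * x) with hAdef
  have hk1 : k * (u ^ 2 + v ^ 2) < 1 := by
    have h1 : k * (u ^ 2 + v ^ 2) < k * (1 / k) := mul_lt_mul_of_pos_left huv hk
    rwa [mul_one_div_cancel hk.ne'] at h1
  have hwlt : ∀ x : ℝ, (w x) ^ 2 < 1 := by
    intro x
    have h1 : (u * Real.cos (s * x) + v * Real.sin (s * x)) ^ 2 ≤ u ^ 2 + v ^ 2 := by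
      nlinarith [sq_nonneg (u * Real.sin (s * x) - v * Real.cos (s * x)),
        Real.sin_sq_add_cos_sq (s * x)]
    have : (w x) ^ 2 = k * (u * Real.cos (s * x) + v * Real.sin (s * x)) ^ 2 := by
      simp only [hWdef]; rw [mul_pow, hs2]
    nlinarith [mul_le_mul_of_nonneg_left h1 hk.le]
  set h : ℝ → ℝ := fun x => Real.sqrt (1 - (w x) ^ 2) with hHdef
  have hhpos : ∀ x : ℝ, 0 < h x := fun x => Real.sqrt_pos.mpr (by nlinarith [hwlt x])
  have hhsq : ∀ x : ℝ, (h x) ^ 2 = 1 - (w x) ^ 2 := fun x =>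
    Real.sq_sqrt (by nlinarith [hwlt x])
  have hwne1 : ∀ x : ℝ, w x ≠ 1 := fun x hx => by nlinarith [hwlt x]
  have hwnem1 : ∀ x : ℝ, w x ≠ -1 := fun x hx => by nlinarith [hwlt x]
  -- derivatives of w and A
  have hst : ∀ x : ℝ, HasDerivAt (fun y : ℝ => s * y) s x := by
    intro x; simpa using (hasDerivAt_id x).const_mul s
  have hw' : ∀ x : ℝ, HasDerivAt w (s ^ 2 * A x) x := by
    intro x
    have hcos : HasDerivAt (fun y => Real.cos (s * y)) (-Real.sin (s * x) * s) x :=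
      (Real.hasDerivAt_cos (s * x)).comp x (hst x)
    have hsin : HasDerivAt (fun y => Real.sin (s * y)) (Real.cos (s * x) * s) x :=
      (Real.hasDerivAt_sin (s * x)).comp x (hst x)
    have := ((hcos.const_mul u).add (hsin.const_mul v)).const_mul s
    refine this.congr_deriv (Eq.symm ?_)
    simp only [hAdef]; ring
  have hA' : ∀ x : ℝ, HasDerivAt A (-(w x)) x := by
    intro x
    have hcos : HasDerivAt (fun y => Real.cos (s * y)) (-Real.sin (s * x) * s) x :=
      (Real.hasDerivAt_cos (s * x)).comp x (hst x)
    have hsin : HasDerivAt (fun y => Real.sin (s * y)) (Real.cos (s * x) * s) x :=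
      (Real.hasDerivAt_sin (s * x)).comp x (hst x)
    have := (hsin.const_mul (-u)).add (hcos.const_mul v)
    refine this.congr_deriv (Eq.symm ?_)
    simp only [hWdef]; ring
  -- gSph as a composition
  have hgEq : gSph k u v = fun x => (1 / s) * Real.arccos (w x) := rfl
  set G : ℝ → ℝ := fun x => -(s * A x) / h x with hGdef
  have hg' : ∀ x : ℝ, HasDerivAt (gSph k u v) (G x) x := by
    intro x
    have harc : HasDerivAt Real.arccos (-(1 / Real.sqrt (1 - w x ^ 2))) (w x) :=
      Real.hasDerivAt_arccos (hwnem1 x) (hwne1 x)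
    have := ((harc.comp x (hw' x)).const_mul (1 / s))
    rw [hgEq]
    have alg : ∀ a b : ℝ, b ≠ 0 → 1 / s * (-(1 / b) * (s ^ 2 * a)) = -(s * a) / b := by
      intro a b hb; field_simp
    refine this.congr_deriv (Eq.symm ?_)
    exact (alg (A x) (Real.sqrt (1 - w x ^ 2)) (hhpos x).ne').symm
  have hderiv : deriv (gSph k u v) = G := funext fun x => (hg' x).deriv
  -- second derivative
  intro t
  have hh' : HasDerivAt h (-(2 * w t * (s ^ 2 * A t)) / (2 * h t)) t := by
    have h1 : HasDerivAt (fun x => 1 - (w x) ^ 2) (-(2 * w t * (s ^ 2 * A t))) t := by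
      have := ((hw' t).pow 2).const_sub 1
      refine this.congr_deriv (Eq.symm ?_)
      ring
    have := h1.sqrt (by nlinarith [hwlt t])
    simpa [hHdef] using this
  have hG' : HasDerivAt G
      ((-(s * -(w t)) * h t - -(s * A t) * (-(2 * w t * (s ^ 2 * A t)) / (2 * h t))) / (h t) ^ 2)
      t := by
    exact (((hA' t).const_mul s).neg).div hh' (hhpos t).ne'
  refine ⟨(hg' t).differentiableAt, ?_, ?_⟩
  · rw [hderiv]; exact hG'.differentiableAt
  · rw [hderiv, hG'.deriv]
    have hcot : Real.cot (s * gSph k u v t) = w t / h t := by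
      have : s * gSph k u v t = Real.arccos (w t) := by
        rw [hgEq]; field_simp
      rw [this, Real.cot_eq_cos_div_sin, Real.cos_arccos (by nlinarith [hwlt t]) (by nlinarith [hwlt t]),
        Real.sin_arccos]
    rw [hcot]
    simp only [hGdef]
    have hht := hhpos t
    have hsq := hhsq t
    field_simp
end

section
/- Let k > 0, let 0 ≤ a < b with √k · b < π/2, and let g : [a,b] → ℝ be a C², positive-valued, distance-like function with √k · g(t) < π/2 for all t ∈ [a,b]. Suppose g''(t) ≥ √k·(1 − (g'(t))²)·cot(√k·g(t)) for all t ∈ [a,b]. Then for all t₁, t₂ with a ≤ t₁ < t₂ ≤ b and all u, v ∈ ℝ with u² + v² < 1/k such that g_k(t₁; u, v) = g(t₁) and g_k(t₂; u, v) = g(t₂), one has g(t) ≤ g_k(t; u, v) for all t ∈ [t₁, t₂]. -/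
open Set

set_option maxHeartbeats 1000000 in
theorem sph_comparison_of_diff_ineq (k : ℝ) (hk : 0 < k) (a b : ℝ) (ha : 0 ≤ a) (hab : a < b)
    (hb : Real.sqrt k * b < Real.pi / 2) (g : ℝ → ℝ)
    (hC2 : ContDiffOn ℝ 2 g (Icc a b))
    (hpos : ∀ t ∈ Icc a b, 0 < g t)
    (hnonexp : ∀ t₁ ∈ Icc a b, ∀ t₂ ∈ Icc a b, |g t₁ - g t₂| ≤ |t₁ - t₂|)
    (hdistlike : ∀ t₁ ∈ Icc a b, ∀ t₂ ∈ Icc a b, |t₁ - t₂| ≤ g t₁ + g t₂)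
    (hsmall : ∀ t ∈ Icc a b, Real.sqrt k * g t < Real.pi / 2)
    (hineq : ∀ t ∈ Icc a b, (derivWithin (derivWithin g (Icc a b)) (Icc a b)) t ≥ Real.sqrt k * (1 - ((derivWithin g (Icc a b)) t) ^ 2) * Real.cot (Real.sqrt k * g t)) :
    ∀ t₁ t₂, a ≤ t₁ → t₁ < t₂ → t₂ ≤ b → ∀ u v : ℝ, u ^ 2 + v ^ 2 < 1 / k →
      gSph k u v t₁ = g t₁ → gSph k u v t₂ = g t₂ →
      ∀ t ∈ Icc t₁ t₂, g t ≤ gSph k u v t := by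
  intro t₁ t₂ ht₁ h12 ht₂ u v huv he1 he2
  set r := Real.sqrt k with hrdef
  have hr : 0 < r := Real.sqrt_pos.mpr hk
  have hrk : r ^ 2 = k := Real.sq_sqrt hk.le
  have hUD : UniqueDiffOn ℝ (Icc a b) := uniqueDiffOn_Icc hab
  set g' := derivWithin g (Icc a b) with hg'def
  set g'' := derivWithin g' (Icc a b) with hg''def
  have hsub : Icc t₁ t₂ ⊆ Icc a b := Icc_subset_Icc ht₁ ht₂
  have hg_diff : DifferentiableOn ℝ g (Icc a b) := hC2.differentiableOn (by norm_num)
  have hC1' : ContDiffOn ℝ 1 g' (Icc a b) := hC2.derivWithin hUD (by norm_num)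
  have hg'_diff : DifferentiableOn ℝ g' (Icc a b) := hC1'.differentiableOn one_ne_zero
  have Hg : ∀ t ∈ Icc a b, HasDerivWithinAt g (g' t) (Icc a b) t :=
    fun t ht => (hg_diff t ht).hasDerivWithinAt
  have Hg' : ∀ t ∈ Icc a b, HasDerivWithinAt g' (g'' t) (Icc a b) t :=
    fun t ht => (hg'_diff t ht).hasDerivWithinAt
  -- the main functions
  set h := fun t => Real.cos (r * g t) with hh
  set H := fun t => -Real.sin (r * g t) * (r * g' t) with hH
  set hS := fun t : ℝ => r * (u * Real.cos (r * t) + v * Real.sin (r * t)) with hhS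
  set HS := fun t : ℝ => r * r * (v * Real.cos (r * t) - u * Real.sin (r * t)) with hHS
  set s := fun t : ℝ => Real.cos (r * t) with hs
  set sd := fun t : ℝ => -(r * Real.sin (r * t)) with hsd
  set w := fun t => h t - hS t with hw
  set W := fun t => H t - HS t with hWdef
  set D := fun t => (-Real.cos (r * g t) * (r * g' t)) * (r * g' t) +
      (-Real.sin (r * g t)) * (r * g'' t) with hD
  set P := fun t => s t * W t - w t * sd t with hP
  -- elementary derivatives
  have hid : ∀ t : ℝ, HasDerivAt (fun t : ℝ => r * t) r t := by
    intro t
    simpa using (hasDerivAt_id t).const_mul r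
  have dcos : ∀ t : ℝ, HasDerivAt (fun t : ℝ => Real.cos (r * t)) (-(r * Real.sin (r * t))) t := by
    intro t
    have := (Real.hasDerivAt_cos (r * t)).comp t (hid t)
    refine this.congr_deriv ?_; ring
  have dsin : ∀ t : ℝ, HasDerivAt (fun t : ℝ => Real.sin (r * t)) (r * Real.cos (r * t)) t := by
    intro t
    have := (Real.hasDerivAt_sin (r * t)).comp t (hid t)
    refine this.congr_deriv ?_; ring
  have dhS : ∀ t : ℝ, HasDerivAt hS (HS t) t := by
    intro t
    have := (((dcos t).const_mul u).add ((dsin t).const_mul v)).const_mul r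
    refine this.congr_deriv ?_
    simp only [hHS]; ring
  have dHS : ∀ t : ℝ, HasDerivAt HS (-(k * hS t)) t := by
    intro t
    have := (((dcos t).const_mul v).sub ((dsin t).const_mul u)).const_mul (r * r)
    refine this.congr_deriv ?_
    simp only [hhS]
    rw [← hrk]; ring
  have ds : ∀ t : ℝ, HasDerivAt s (sd t) t := dcos
  have dsd : ∀ t : ℝ, HasDerivAt sd (-(k * s t)) t := by
    intro t
    have := (dsin t).const_mul r |>.neg
    refine this.congr_deriv ?_
    simp only [hs]
    rw [← hrk]; ring
  -- derivatives of h, H within Icc a b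
  have drg : ∀ t ∈ Icc a b, HasDerivWithinAt (fun t => r * g t) (r * g' t) (Icc a b) t :=
    fun t ht => (Hg t ht).const_mul r
  have dh : ∀ t ∈ Icc a b, HasDerivWithinAt h (H t) (Icc a b) t := by
    intro t ht
    have := (Real.hasDerivAt_cos (r * g t)).comp_hasDerivWithinAt t (drg t ht)
    exact this
  have dH : ∀ t ∈ Icc a b, HasDerivWithinAt H (D t) (Icc a b) t := by
    intro t ht
    have h1 : HasDerivWithinAt (fun t => -Real.sin (r * g t))
        (-(Real.cos (r * g t) * (r * g' t))) (Icc a b) t :=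
      by have := ((Real.hasDerivAt_sin (r * g t)).comp_hasDerivWithinAt t (drg t ht)).neg; exact this
    have h2 : HasDerivWithinAt (fun t => r * g' t) (r * g'' t) (Icc a b) t :=
      (Hg' t ht).const_mul r
    have := h1.mul h2
    refine this.congr_deriv ?_
    simp only [hD]; ring
  have dw : ∀ t ∈ Icc a b, HasDerivWithinAt w (W t) (Icc a b) t :=
    fun t ht => (dh t ht).sub (dhS t).hasDerivWithinAt
  have dW : ∀ t ∈ Icc a b, HasDerivWithinAt W (D t + k * hS t) (Icc a b) t := by
    intro t ht
    have := (dH t ht).sub (dHS t).hasDerivWithinAt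
    refine this.congr_deriv ?_; ring
  have dP : ∀ t ∈ Icc a b, HasDerivWithinAt P (s t * (D t + k * h t)) (Icc a b) t := by
    intro t ht
    have := ((ds t).hasDerivWithinAt.mul (dW t ht)).sub
      ((dw t ht).mul (dsd t).hasDerivWithinAt)
    refine this.congr_deriv ?_
    simp only [hw]; ring
  -- sign facts
  have hrg_mem : ∀ t ∈ Icc a b, 0 < r * g t ∧ r * g t < Real.pi / 2 := by
    intro t ht
    exact ⟨mul_pos hr (hpos t ht), hsmall t ht⟩
  have hsin_pos : ∀ t ∈ Icc a b, 0 < Real.sin (r * g t) := by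
    intro t ht
    obtain ⟨h1, h2⟩ := hrg_mem t ht
    exact Real.sin_pos_of_pos_of_lt_pi h1 (h2.trans_le (by linarith [Real.pi_pos]))
  have hDkh : ∀ t ∈ Icc a b, D t + k * h t ≤ 0 := by
    intro t ht
    have hsn := hsin_pos t ht
    have hiq := hineq t ht
    rw [Real.cot_eq_cos_div_sin] at hiq
    have key : r ^ 2 * ((1 - g' t ^ 2) * Real.cos (r * g t)) ≤ r * Real.sin (r * g t) * g'' t := by
      have := mul_le_mul_of_nonneg_left hiq (le_of_lt (mul_pos hr hsn))
      calc r ^ 2 * ((1 - g' t ^ 2) * Real.cos (r * g t))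
          = r * Real.sin (r * g t) *
            (r * (1 - g' t ^ 2) * (Real.cos (r * g t) / Real.sin (r * g t))) := by
            field_simp
        _ ≤ r * Real.sin (r * g t) * g'' t := this
    simp only [hD, hh]
    rw [← hrk]
    nlinarith [key]
  have hs_pos : ∀ t ∈ Icc t₁ t₂, 0 < s t := by
    intro t ht
    have h1 : 0 ≤ r * t := mul_nonneg hr.le (le_trans (le_trans ha ht₁) ht.1)
    have h2 : r * t < Real.pi / 2 :=
      lt_of_le_of_lt (mul_le_mul_of_nonneg_left (le_trans ht.2 ht₂) hr.le) hb
    exact Real.cos_pos_of_mem_Ioo ⟨by linarith [Real.pi_pos], h2⟩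
  -- |hS t| < 1
  have hS_lt : ∀ t : ℝ, hS t ^ 2 < 1 := by
    intro t
    have hpyth := Real.sin_sq_add_cos_sq (r * t)
    have h1 : (u * Real.cos (r * t) + v * Real.sin (r * t)) ^ 2 ≤ u ^ 2 + v ^ 2 := by
      nlinarith [sq_nonneg (u * Real.sin (r * t) - v * Real.cos (r * t))]
    have h2 : k * (u ^ 2 + v ^ 2) < 1 := by
      have := (mul_lt_mul_iff_right₀ hk).mpr huv
      rwa [mul_one_div, div_self hk.ne'] at this
    simp only [hhS]
    calc (r * (u * Real.cos (r * t) + v * Real.sin (r * t))) ^ 2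
        = k * (u * Real.cos (r * t) + v * Real.sin (r * t)) ^ 2 := by rw [← hrk]; ring
      _ ≤ k * (u ^ 2 + v ^ 2) := by nlinarith
      _ < 1 := h2
  have hS_mem : ∀ t : ℝ, -1 ≤ hS t ∧ hS t ≤ 1 := by
    intro t
    have := hS_lt t
    constructor <;> nlinarith
  -- unfolding gSph
  have hgSph : ∀ t : ℝ, gSph k u v t = (1 / r) * Real.arccos (hS t) := by
    intro t
    simp only [gSph, hhS, ← hrdef]
  -- endpoint equalities : w t₁ = 0, w t₂ = 0
  have hend : ∀ t ∈ Icc a b, gSph k u v t = g t → w t = 0 := by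
    intro t ht he
    rw [hgSph t] at he
    have : r * g t = Real.arccos (hS t) := by
      rw [← he]; field_simp
    simp only [hw, hh, this, Real.cos_arccos (hS_mem t).1 (hS_mem t).2, sub_self]
  have htm1 : t₁ ∈ Icc a b := ⟨ht₁, le_trans h12.le ht₂⟩
  have htm2 : t₂ ∈ Icc a b := ⟨le_trans ht₁ h12.le, ht₂⟩
  have hw1 : w t₁ = 0 := hend t₁ htm1 he1
  have hw2 : w t₂ = 0 := hend t₂ htm2 he2
  -- P is antitone on [t₁, t₂]
  have hIoo_sub : Ioo t₁ t₂ ⊆ Icc a b := fun x hx => ⟨le_trans ht₁ hx.1.le, le_trans hx.2.le ht₂⟩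
  have hnhds : ∀ x ∈ Ioo t₁ t₂, Icc a b ∈ nhds x := by
    intro x hx
    exact Icc_mem_nhds (lt_of_le_of_lt ht₁ hx.1) (lt_of_lt_of_le hx.2 ht₂)
  have hPanti : AntitoneOn P (Icc t₁ t₂) := by
    apply antitoneOn_of_hasDerivWithinAt_nonpos (convex_Icc t₁ t₂)
      (f' := fun t => s t * (D t + k * h t))
    · exact ContinuousOn.mono (fun t ht => (dP t ht).continuousWithinAt) hsub
    · intro x hx
      rw [interior_Icc] at hx
      exact (((dP x (hIoo_sub hx)).hasDerivAt (hnhds x hx)).hasDerivWithinAt)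
    · intro x hx
      rw [interior_Icc] at hx
      have h1 : 0 < s x := hs_pos x ⟨hx.1.le, hx.2.le⟩
      have h2 := hDkh x (hIoo_sub hx)
      exact mul_nonpos_of_nonneg_of_nonpos h1.le h2
  -- w ≥ 0 on [t₁, t₂]
  have hwnn : ∀ t ∈ Icc t₁ t₂, 0 ≤ w t := by
    by_contra hcon
    push_neg at hcon
    obtain ⟨m, hm, hwm⟩ := hcon
    have hm1 : t₁ < m := by
      rcases lt_or_eq_of_le hm.1 with h | h
      · exact h
      · exfalso; rw [← h, hw1] at hwm; exact absurd hwm (lt_irrefl 0)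
    have hm2 : m < t₂ := by
      rcases lt_or_eq_of_le hm.2 with h | h
      · exact h
      · exfalso; rw [h, hw2] at hwm; exact absurd hwm (lt_irrefl 0)
    set q := fun t => w t / s t with hq
    have hq_cont : ContinuousOn q (Icc t₁ t₂) := by
      apply ContinuousOn.div
      · exact ContinuousOn.mono (fun t ht => (dw t ht).continuousWithinAt) hsub
      · exact (fun t ht => (ds t).continuousAt.continuousWithinAt)
      · exact fun t ht => (hs_pos t ht).ne'
    have hq_deriv : ∀ x ∈ Ioo t₁ t₂, HasDerivAt q (P x / s x ^ 2) x := by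
      intro x hx
      have hwx : HasDerivAt w (W x) x := (dw x (hIoo_sub hx)).hasDerivAt (hnhds x hx)
      have := hwx.div (ds x) (hs_pos x ⟨hx.1.le, hx.2.le⟩).ne'
      refine this.congr_deriv ?_
      simp only [hP]; ring
    have hq1 : q t₁ = 0 := by simp [hq, hw1]
    have hq2 : q t₂ = 0 := by simp [hq, hw2]
    have hqm : q m < 0 := div_neg_of_neg_of_pos hwm (hs_pos m hm)
    obtain ⟨c₁, hc₁, hc₁'⟩ := exists_hasDerivAt_eq_slope q (fun x => P x / s x ^ 2) hm1
      (hq_cont.mono (Icc_subset_Icc le_rfl hm2.le))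
      (fun x hx => hq_deriv x ⟨hx.1, lt_trans hx.2 hm2⟩)
    obtain ⟨c₂, hc₂, hc₂'⟩ := exists_hasDerivAt_eq_slope q (fun x => P x / s x ^ 2) hm2
      (hq_cont.mono (Icc_subset_Icc hm1.le le_rfl))
      (fun x hx => hq_deriv x ⟨lt_trans hm1 hx.1, hx.2⟩)
    have hc₁mem : c₁ ∈ Icc t₁ t₂ := ⟨hc₁.1.le, le_trans hc₁.2.le hm2.le⟩
    have hc₂mem : c₂ ∈ Icc t₁ t₂ := ⟨le_trans hm1.le hc₂.1.le, hc₂.2.le⟩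
    have hP1neg : P c₁ < 0 := by
      have hslope : P c₁ / s c₁ ^ 2 < 0 := by
        rw [hc₁', hq1]
        apply div_neg_of_neg_of_pos
        · simpa using hqm
        · linarith [hm1]
      have h2 : (0:ℝ) < s c₁ ^ 2 := pow_pos (hs_pos c₁ hc₁mem) 2
      calc P c₁ = P c₁ / s c₁ ^ 2 * s c₁ ^ 2 := (div_mul_cancel₀ _ h2.ne').symm
        _ < 0 := mul_neg_of_neg_of_pos hslope h2
    have hP2pos : 0 < P c₂ := by
      have hslope : 0 < P c₂ / s c₂ ^ 2 := by
        rw [hc₂', hq2]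
        apply div_pos
        · simpa using neg_pos.mpr hqm
        · linarith [hm2]
      have h2 : (0:ℝ) < s c₂ ^ 2 := pow_pos (hs_pos c₂ hc₂mem) 2
      calc (0:ℝ) < P c₂ / s c₂ ^ 2 * s c₂ ^ 2 := mul_pos hslope h2
        _ = P c₂ := div_mul_cancel₀ _ h2.ne'
    have hcc : c₁ ≤ c₂ := le_trans hc₁.2.le hc₂.1.le
    have := hPanti hc₁mem hc₂mem hcc
    linarith
  -- conclusion
  intro t ht
  have htab : t ∈ Icc a b := hsub ht
  have hwt : hS t ≤ h t := by have := hwnn t ht; simp only [hw] at this; linarith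
  rw [hgSph t]
  have hrg := hrg_mem t htab
  have harc : r * g t = Real.arccos (h t) := by
    simp only [hh]
    rw [Real.arccos_cos hrg.1.le (le_trans hrg.2.le (by linarith [Real.pi_pos]))]
  have hle : Real.arccos (h t) ≤ Real.arccos (hS t) := by
    have hhm : h t ∈ Icc (-1 : ℝ) 1 := ⟨Real.neg_one_le_cos _, Real.cos_le_one _⟩
    have hSm : hS t ∈ Icc (-1 : ℝ) 1 := ⟨(hS_mem t).1, (hS_mem t).2⟩
    exact (Real.strictAntiOn_arccos.le_iff_ge hhm hSm).mpr hwt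
  rw [← harc] at hle
  rw [one_div, mul_comm]
  calc g t = r * g t * r⁻¹ := by field_simp
    _ ≤ Real.arccos (hS t) * r⁻¹ := by
        apply mul_le_mul_of_nonneg_right hle (by positivity)
end

section
/- Let k > 0, let 0 ≤ a < b with √k · b < π/2, and let g : [a,b] → ℝ be a C², positive-valued, distance-like function with √k · g(t) < π/2 for all t ∈ [a,b]. Suppose that for every t₁, t₂ with a ≤ t₁ < t₂ ≤ b there exist u, v ∈ ℝ with u² + v² < 1/k, g_k(t₁; u, v) = g(t₁), g_k(t₂; u, v) = g(t₂), and g(t) ≤ g_k(t; u, v) for all t ∈ [t₁, t₂]. Then g''(t) ≥ √k·(1 − (g'(t))²)·cot(√k·g(t)) holds for all t ∈ [a,b]. -/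
open Set

lemma sin_lip (x y : ℝ) : |Real.sin x - Real.sin y| ≤ |x - y| := by
  rw [Real.sin_sub_sin, abs_mul, abs_mul, abs_two]
  have h1 : |Real.sin ((x - y) / 2)| ≤ |(x - y) / 2| := Real.abs_sin_le_abs
  have h2 : |Real.cos ((x + y) / 2)| ≤ 1 := Real.abs_cos_le_one _
  have h3 : |(x - y) / 2| = |x - y| / 2 := by rw [abs_div, abs_two]
  nlinarith [abs_nonneg (Real.sin ((x - y) / 2)), abs_nonneg (x - y)]

lemma cos_lip (x y : ℝ) : |Real.cos x - Real.cos y| ≤ |x - y| := by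
  rw [Real.cos_sub_cos, abs_mul, abs_mul, abs_neg, abs_two]
  have h1 : |Real.sin ((x - y) / 2)| ≤ |(x - y) / 2| := Real.abs_sin_le_abs
  have h2 : |Real.sin ((x + y) / 2)| ≤ 1 := Real.abs_sin_le_one _
  have h3 : |(x - y) / 2| = |x - y| / 2 := by rw [abs_div, abs_two]
  nlinarith [abs_nonneg (Real.sin ((x - y) / 2)), abs_nonneg (x - y),
    abs_nonneg (Real.sin ((x+y)/2))]

lemma six_bound (x e : ℝ) (hx : 0 < x) (he : 0 < e) :
    6 * x * (e / (24 * (x + 1))) ≤ e / 4 := by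
  rw [← mul_div_assoc, div_le_div_iff₀ (by positivity) (by norm_num : (0:ℝ) < 4)]
  nlinarith [mul_pos hx he]

lemma sph_amp_bound (r u v c s : ℝ) (hr : 0 < r) (hcs : s^2 + c^2 = 1)
    (huv : u^2 + v^2 < 1/(r*r)) : |r * (u*c + v*s)| ≤ 1 := by
  have h1 : (u*c+v*s)^2 + (u*s - v*c)^2 = u^2+v^2 := by linear_combination (u^2+v^2)*hcs
  have hrr : 0 < r*r := mul_pos hr hr
  have h2 : (r*(u*c+v*s))^2 ≤ 1^2 := by
    have h3 : (u*c+v*s)^2 ≤ u^2+v^2 := by nlinarith [sq_nonneg (u*s-v*c)]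
    have h4 : (r*r) * (u^2+v^2) ≤ 1 := by
      rw [lt_div_iff₀ hrr] at huv
      nlinarith
    nlinarith
  have h5 := abs_le_of_sq_le_sq' h2 one_pos.le
  exact abs_le.mpr h5

theorem diff_ineq_of_sph_comparison (k : ℝ) (hk : 0 < k) (a b : ℝ) (ha : 0 ≤ a) (hab : a < b)
    (hb : Real.sqrt k * b < Real.pi / 2) (g : ℝ → ℝ)
    (hC2 : ContDiffOn ℝ 2 g (Icc a b))
    (hpos : ∀ t ∈ Icc a b, 0 < g t)
    (hnonexp : ∀ t₁ ∈ Icc a b, ∀ t₂ ∈ Icc a b, |g t₁ - g t₂| ≤ |t₁ - t₂|)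
    (hdistlike : ∀ t₁ ∈ Icc a b, ∀ t₂ ∈ Icc a b, |t₁ - t₂| ≤ g t₁ + g t₂)
    (hsmall : ∀ t ∈ Icc a b, Real.sqrt k * g t < Real.pi / 2)
    (hcmp : ∀ t₁ t₂, a ≤ t₁ → t₁ < t₂ → t₂ ≤ b →
      ∃ u v : ℝ, u ^ 2 + v ^ 2 < 1 / k ∧
      gSph k u v t₁ = g t₁ ∧ gSph k u v t₂ = g t₂ ∧
      ∀ t ∈ Icc t₁ t₂, g t ≤ gSph k u v t) :
    ∀ t ∈ Icc a b, (derivWithin (derivWithin g (Icc a b)) (Icc a b)) t ≥ Real.sqrt k * (1 - ((derivWithin g (Icc a b)) t) ^ 2) * Real.cot (Real.sqrt k * g t) := by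
  have hrk : 0 < Real.sqrt k := Real.sqrt_pos.mpr hk
  have hkk : Real.sqrt k * Real.sqrt k = k := Real.mul_self_sqrt hk.le
  have huniq : UniqueDiffOn ℝ (Icc a b) := uniqueDiffOn_Icc hab
  set g1 := derivWithin g (Icc a b) with hg1def
  set g2 := derivWithin g1 (Icc a b) with hg2def
  have hg_diff : DifferentiableOn ℝ g (Icc a b) := hC2.differentiableOn (by norm_num)
  have hg1_cd : ContDiffOn ℝ 1 g1 (Icc a b) := hC2.derivWithin huniq (by norm_num)
  have hg1_diff : DifferentiableOn ℝ g1 (Icc a b) := hg1_cd.differentiableOn (by norm_num)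
  have hg1_cont : ContinuousOn g1 (Icc a b) := hg1_diff.continuousOn
  have hg2_cd : ContDiffOn ℝ 0 g2 (Icc a b) := hg1_cd.derivWithin huniq (by norm_num)
  have hg2_cont : ContinuousOn g2 (Icc a b) := hg2_cd.continuousOn
  have hg_cont : ContinuousOn g (Icc a b) := hC2.continuousOn
  -- abbreviations
  set w : ℝ → ℝ := fun t => Real.cos (Real.sqrt k * g t) with hwdef
  set w1 : ℝ → ℝ := fun t => -Real.sin (Real.sqrt k * g t) * (Real.sqrt k * g1 t) with hw1def
  set w2 : ℝ → ℝ := fun t =>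
      -(Real.cos (Real.sqrt k * g t) * (Real.sqrt k * g1 t)) * (Real.sqrt k * g1 t) +
      -Real.sin (Real.sqrt k * g t) * (Real.sqrt k * g2 t) with hw2def
  -- interior derivatives
  have hgD : ∀ x ∈ Ioo a b, HasDerivAt g (g1 x) x := by
    intro x hx
    exact ((hg_diff x (Ioo_subset_Icc_self hx)).hasDerivWithinAt).hasDerivAt
      (Icc_mem_nhds hx.1 hx.2)
  have hg1D : ∀ x ∈ Ioo a b, HasDerivAt g1 (g2 x) x := by
    intro x hx
    exact ((hg1_diff x (Ioo_subset_Icc_self hx)).hasDerivWithinAt).hasDerivAt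
      (Icc_mem_nhds hx.1 hx.2)
  have hwD : ∀ x ∈ Ioo a b, HasDerivAt w (w1 x) x := by
    intro x hx
    exact ((hgD x hx).const_mul (Real.sqrt k)).cos
  have hw1D : ∀ x ∈ Ioo a b, HasDerivAt w1 (w2 x) x := by
    intro x hx
    exact (((hgD x hx).const_mul (Real.sqrt k)).sin.neg).mul
      ((hg1D x hx).const_mul (Real.sqrt k))
  -- continuity
  have hw_cont : ContinuousOn w (Icc a b) := by
    apply Real.continuous_cos.comp_continuousOn (continuousOn_const.mul hg_cont)
  have hw1_cont : ContinuousOn w1 (Icc a b) := by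
    exact ((Real.continuous_sin.comp_continuousOn (continuousOn_const.mul hg_cont)).neg).mul
      (continuousOn_const.mul hg1_cont)
  have hw2_cont : ContinuousOn w2 (Icc a b) := by
    apply ContinuousOn.add
    · exact (((Real.continuous_cos.comp_continuousOn (continuousOn_const.mul hg_cont)).mul
        (continuousOn_const.mul hg1_cont)).neg).mul (continuousOn_const.mul hg1_cont)
    · exact ((Real.continuous_sin.comp_continuousOn (continuousOn_const.mul hg_cont)).neg).mul
        (continuousOn_const.mul hg2_cont)
  have hFcont : ContinuousOn (fun t => w2 t + k * w t) (Icc a b) :=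
    hw2_cont.add (continuousOn_const.mul hw_cont)
  -- the key differential inequality for w
  have key : ∀ t₀ ∈ Icc a b, w2 t₀ + k * w t₀ ≤ 0 := by
    intro t₀ ht₀
    by_contra hcon
    push_neg at hcon
    set ε := w2 t₀ + k * w t₀ with hεdef
    clear_value ε
    obtain ⟨δ, hδpos, hδ⟩ := Metric.continuousWithinAt_iff.mp (hFcont t₀ ht₀) (ε/2) (by linarith)
    set d := min (δ/2) (min ((b-a)/2) (ε / (24 * (k * Real.sqrt k + 1)))) with hddef
    have hkpos : (0:ℝ) < k * Real.sqrt k + 1 := by positivity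
    have hdpos : 0 < d := by
      apply lt_min (by linarith)
      apply lt_min (by linarith)
      positivity
    set t₁ := max a (t₀ - d) with ht₁def
    set t₂ := min b (t₀ + d) with ht₂def
    have ht₁a : a ≤ t₁ := le_max_left _ _
    have ht₂b : t₂ ≤ b := min_le_left _ _
    have ht₁t₀ : t₁ ≤ t₀ := max_le ht₀.1 (by linarith)
    have ht₀t₂ : t₀ ≤ t₂ := le_min ht₀.2 (by linarith)
    have ht₁d : t₀ - d ≤ t₁ := le_max_right _ _
    have ht₂d : t₂ ≤ t₀ + d := min_le_right _ _
    have ht12 : t₁ < t₂ := by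
      rcases lt_or_ge t₀ b with h | h
      · exact lt_of_le_of_lt ht₁t₀ (lt_min h (by linarith))
      · have hb' : t₀ = b := le_antisymm ht₀.2 h
        have h1 : t₁ < b := max_lt hab (by rw [hb']; linarith)
        exact lt_of_lt_of_le h1 (le_min le_rfl (by rw [hb']; linarith))
    have hsubI : Icc t₁ t₂ ⊆ Icc a b := Icc_subset_Icc ht₁a ht₂b
    have hsubO : Ioo t₁ t₂ ⊆ Ioo a b := Ioo_subset_Ioo ht₁a ht₂b
    have hnear : ∀ x ∈ Icc t₁ t₂, dist x t₀ < δ := by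
      intro x hx
      rw [Real.dist_eq, abs_lt]
      have h1 := hx.1; have h2 := hx.2
      have hd2 : d ≤ δ/2 := min_le_left _ _
      constructor <;> linarith
    have hdlen : t₂ - t₁ ≤ 2 * d := by linarith
    -- get the comparison function
    obtain ⟨u, v, huv, he1, he2, hle⟩ := hcmp t₁ t₂ ht₁a ht12 ht₂b
    set W : ℝ → ℝ := fun t =>
      Real.sqrt k * (u * Real.cos (Real.sqrt k * t) + v * Real.sin (Real.sqrt k * t)) with hWdef
    have hgSphW : ∀ t, gSph k u v t = (1 / Real.sqrt k) * Real.arccos (W t) := fun t => rfl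
    have habsu : |u| ≤ 1 / Real.sqrt k := by
      rw [← Real.sqrt_sq_eq_abs, show (1:ℝ) / Real.sqrt k = Real.sqrt (1/k) by
        rw [one_div, one_div, Real.sqrt_inv]]
      exact Real.sqrt_le_sqrt (by nlinarith [sq_nonneg v])
    have habsv : |v| ≤ 1 / Real.sqrt k := by
      rw [← Real.sqrt_sq_eq_abs, show (1:ℝ) / Real.sqrt k = Real.sqrt (1/k) by
        rw [one_div, one_div, Real.sqrt_inv]]
      exact Real.sqrt_le_sqrt (by nlinarith [sq_nonneg u])
    have hWbd : ∀ t, -1 ≤ W t ∧ W t ≤ 1 := by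
      intro t
      have h1 : |W t| ≤ 1 := by
        rw [hWdef]
        exact sph_amp_bound (Real.sqrt k) u v (Real.cos (Real.sqrt k * t))
          (Real.sin (Real.sqrt k * t)) hrk (Real.sin_sq_add_cos_sq _) (by rw [hkk]; exact huv)
      exact abs_le.mp h1
    have hWw : ∀ {t}, t ∈ Icc a b → gSph k u v t = g t → W t = w t := by
      intro t htab h
      rw [hgSphW] at h
      have h2 : Real.arccos (W t) = Real.sqrt k * g t := by
        field_simp [hrk.ne'] at h
        linarith
      calc W t = Real.cos (Real.arccos (W t)) := (Real.cos_arccos (hWbd t).1 (hWbd t).2).symm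
        _ = w t := by rw [h2]
    have hWt₁ : W t₁ = w t₁ := hWw (hsubI (left_mem_Icc.mpr ht12.le)) he1
    have hWt₂ : W t₂ = w t₂ := hWw (hsubI (right_mem_Icc.mpr ht12.le)) he2
    have hWle : ∀ x ∈ Icc t₁ t₂, W x ≤ w x := by
      intro x hx
      have hxab := hsubI hx
      have h := hle x hx
      rw [hgSphW] at h
      have h2 : Real.sqrt k * g x ≤ Real.arccos (W x) := by
        calc Real.sqrt k * g x ≤ Real.sqrt k * ((1/Real.sqrt k) * Real.arccos (W x)) :=
              mul_le_mul_of_nonneg_left h hrk.le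
          _ = Real.arccos (W x) := by field_simp
      have h3 : 0 ≤ Real.sqrt k * g x := le_of_lt (mul_pos hrk (hpos x hxab))
      have h4 : Real.arccos (W x) ≤ Real.pi := Real.arccos_le_pi _
      have h5 : Real.cos (Real.arccos (W x)) ≤ Real.cos (Real.sqrt k * g x) :=
        Real.cos_le_cos_of_nonneg_of_le_pi h3 h4 h2
      rwa [Real.cos_arccos (hWbd x).1 (hWbd x).2] at h5
    -- derivatives of W
    have hid : ∀ x : ℝ, HasDerivAt (fun t : ℝ => Real.sqrt k * t) (Real.sqrt k) x := by
      intro x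
      simpa using (hasDerivAt_id x).const_mul (Real.sqrt k)
    set W1 : ℝ → ℝ := fun x => Real.sqrt k * (u * (-Real.sin (Real.sqrt k * x) * Real.sqrt k) +
      v * (Real.cos (Real.sqrt k * x) * Real.sqrt k)) with hW1def
    have hWcont : Continuous W := by rw [hWdef]; fun_prop
    have hW1cont : Continuous W1 := by rw [hW1def]; fun_prop
    have hWD : ∀ x : ℝ, HasDerivAt W (W1 x) x := by
      intro x
      exact (((hid x).cos.const_mul u).add ((hid x).sin.const_mul v)).const_mul (Real.sqrt k)
    have hW1D : ∀ x : ℝ, HasDerivAt W1 (-k * W x) x := by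
      intro x
      have h := ((((hid x).sin.neg.mul_const (Real.sqrt k)).const_mul u).add
        (((hid x).cos.mul_const (Real.sqrt k)).const_mul v)).const_mul (Real.sqrt k)
      refine h.congr_deriv ?_
      symm
      rw [hWdef]
      linear_combination (Real.sqrt k * (u * Real.cos (Real.sqrt k * x) +
        v * Real.sin (Real.sqrt k * x))) * hkk
    -- the difference z and the MVT chain
    set z : ℝ → ℝ := fun t => w t - W t with hzdef
    set z1 : ℝ → ℝ := fun t => w1 t - W1 t with hz1def
    have hzcont : ContinuousOn z (Icc t₁ t₂) :=
      (hw_cont.mono hsubI).sub hWcont.continuousOn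
    have hzD : ∀ x ∈ Ioo t₁ t₂, HasDerivAt z (z1 x) x := fun x hx =>
      (hwD x (hsubO hx)).sub (hWD x)
    have hz1D : ∀ x ∈ Ioo t₁ t₂, HasDerivAt z1 (w2 x - -k * W x) x := fun x hx =>
      (hw1D x (hsubO hx)).sub (hW1D x)
    have hznn : ∀ x ∈ Icc t₁ t₂, 0 ≤ z x := by
      intro x hx
      simp only [hzdef, sub_nonneg]
      exact hWle x hx
    have hzt₁ : z t₁ = 0 := by simp [hzdef, hWt₁]
    have hzt₂ : z t₂ = 0 := by simp [hzdef, hWt₂]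
    set m := (t₁ + t₂) / 2 with hmdef
    have hm1 : t₁ < m := by rw [hmdef]; linarith
    have hm2 : m < t₂ := by rw [hmdef]; linarith
    obtain ⟨ξ₁, hξ₁mem, hξ₁⟩ := exists_hasDerivAt_eq_slope z z1 hm1
      (hzcont.mono (Icc_subset_Icc le_rfl hm2.le))
      (fun x hx => hzD x ⟨hx.1, lt_trans hx.2 hm2⟩)
    obtain ⟨ξ₂, hξ₂mem, hξ₂⟩ := exists_hasDerivAt_eq_slope z z1 hm2
      (hzcont.mono (Icc_subset_Icc hm1.le le_rfl))
      (fun x hx => hzD x ⟨lt_trans hm1 hx.1, hx.2⟩)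
    have hξ₁nn : 0 ≤ z1 ξ₁ := by
      rw [hξ₁, hzt₁]
      apply div_nonneg _ (by linarith [hξ₁mem.1, hξ₁mem.2] : (0:ℝ) ≤ m - t₁)
      have := hznn m ⟨hm1.le, hm2.le⟩
      linarith
    have hξ₂np : z1 ξ₂ ≤ 0 := by
      rw [hξ₂, hzt₂]
      apply div_nonpos_of_nonpos_of_nonneg _ (by linarith [hξ₂mem.1] : (0:ℝ) ≤ t₂ - m)
      have := hznn m ⟨hm1.le, hm2.le⟩
      linarith
    have hξ₁ξ₂ : ξ₁ < ξ₂ := lt_trans hξ₁mem.2 hξ₂mem.1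
    have hsubO2 : Ioo ξ₁ ξ₂ ⊆ Ioo t₁ t₂ :=
      Ioo_subset_Ioo hξ₁mem.1.le hξ₂mem.2.le
    obtain ⟨τ, hτmem, hτ⟩ := exists_hasDerivAt_eq_slope z1 (fun x => w2 x - -k * W x) hξ₁ξ₂
      (((hw1_cont.mono hsubI).sub hW1cont.continuousOn).mono
        (Icc_subset_Icc hξ₁mem.1.le hξ₂mem.2.le))
      (fun x hx => hz1D x (hsubO2 hx))
    have hτI : τ ∈ Ioo t₁ t₂ := hsubO2 hτmem
    have hτab : τ ∈ Icc a b := Ioo_subset_Icc_self (hsubO hτI)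
    have hz2np : w2 τ - -k * W τ ≤ 0 := by
      rw [hτ]
      apply div_nonpos_of_nonpos_of_nonneg _ (by linarith [hξ₁ξ₂] : (0:ℝ) ≤ ξ₂ - ξ₁)
      linarith
    -- Lipschitz bound on z at τ
    have ht₁ab : t₁ ∈ Icc a b := ⟨ht₁a, le_trans ht12.le ht₂b⟩
    have hτt₁ : (0:ℝ) ≤ τ - t₁ := by linarith [hτI.1]
    have hwlip : |w τ - w t₁| ≤ Real.sqrt k * (τ - t₁) := by
      calc |w τ - w t₁| ≤ |Real.sqrt k * g τ - Real.sqrt k * g t₁| := cos_lip _ _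
        _ = Real.sqrt k * |g τ - g t₁| := by
            rw [← mul_sub, abs_mul, abs_of_nonneg hrk.le]
        _ ≤ Real.sqrt k * |τ - t₁| :=
            mul_le_mul_of_nonneg_left (hnonexp τ hτab t₁ ht₁ab) hrk.le
        _ = Real.sqrt k * (τ - t₁) := by rw [abs_of_nonneg hτt₁]
    have hWlip : |W τ - W t₁| ≤ 2 * Real.sqrt k * (τ - t₁) := by
      have hc : |Real.cos (Real.sqrt k * τ) - Real.cos (Real.sqrt k * t₁)| ≤
          Real.sqrt k * (τ - t₁) := by
        calc _ ≤ |Real.sqrt k * τ - Real.sqrt k * t₁| := cos_lip _ _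
          _ = Real.sqrt k * (τ - t₁) := by
              rw [← mul_sub, abs_mul, abs_of_nonneg hrk.le, abs_of_nonneg hτt₁]
      have hs : |Real.sin (Real.sqrt k * τ) - Real.sin (Real.sqrt k * t₁)| ≤
          Real.sqrt k * (τ - t₁) := by
        calc _ ≤ |Real.sqrt k * τ - Real.sqrt k * t₁| := sin_lip _ _
          _ = Real.sqrt k * (τ - t₁) := by
              rw [← mul_sub, abs_mul, abs_of_nonneg hrk.le, abs_of_nonneg hτt₁]
      have he : W τ - W t₁ = Real.sqrt k * (u * (Real.cos (Real.sqrt k * τ) -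
          Real.cos (Real.sqrt k * t₁)) + v * (Real.sin (Real.sqrt k * τ) -
          Real.sin (Real.sqrt k * t₁))) := by
        rw [hWdef]; ring
      rw [he]
      have hb1 : |u * (Real.cos (Real.sqrt k * τ) - Real.cos (Real.sqrt k * t₁))| ≤
          (1 / Real.sqrt k) * (Real.sqrt k * (τ - t₁)) := by
        rw [abs_mul]
        exact mul_le_mul habsu hc (abs_nonneg _) (by positivity)
      have hb2 : |v * (Real.sin (Real.sqrt k * τ) - Real.sin (Real.sqrt k * t₁))| ≤
          (1 / Real.sqrt k) * (Real.sqrt k * (τ - t₁)) := by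
        rw [abs_mul]
        exact mul_le_mul habsv hs (abs_nonneg _) (by positivity)
      have hsum := abs_add_le (u * (Real.cos (Real.sqrt k * τ) - Real.cos (Real.sqrt k * t₁)))
        (v * (Real.sin (Real.sqrt k * τ) - Real.sin (Real.sqrt k * t₁)))
      rw [abs_mul, abs_of_nonneg hrk.le]
      calc Real.sqrt k * |u * (Real.cos (Real.sqrt k * τ) - Real.cos (Real.sqrt k * t₁)) +
            v * (Real.sin (Real.sqrt k * τ) - Real.sin (Real.sqrt k * t₁))| ≤
          Real.sqrt k * (2 * ((1 / Real.sqrt k) * (Real.sqrt k * (τ - t₁)))) := by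
            apply mul_le_mul_of_nonneg_left _ hrk.le
            linarith only [hsum, hb1, hb2]
        _ = 2 * Real.sqrt k * (τ - t₁) := by field_simp
    have hzτ : z τ ≤ 3 * Real.sqrt k * (t₂ - t₁) := by
      have he : z τ = (w τ - w t₁) - (W τ - W t₁) := by
        rw [hzdef]
        simp only
        rw [hWt₁]; ring
      rw [he]
      have h1 := abs_le.mp hwlip
      have h2 := abs_le.mp hWlip
      have hττ : τ - t₁ ≤ t₂ - t₁ := by linarith [hτI.2]
      have h3 : Real.sqrt k * (τ - t₁) ≤ Real.sqrt k * (t₂ - t₁) :=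
        mul_le_mul_of_nonneg_left hττ hrk.le
      linarith only [h1.2, h2.1, h3]
    -- conclude the contradiction
    have hFτ : w2 τ + k * w τ ≤ 6 * (k * Real.sqrt k) * d := by
      have h1 : w2 τ + k * w τ = (w2 τ - -k * W τ) + k * z τ := by
        rw [hzdef]; simp only; ring
      rw [h1]
      have h2 : k * z τ ≤ k * (3 * Real.sqrt k * (t₂ - t₁)) :=
        mul_le_mul_of_nonneg_left hzτ hk.le
      have h3 : k * (3 * Real.sqrt k * (t₂ - t₁)) ≤ k * (3 * Real.sqrt k * (2*d)) := by
        apply mul_le_mul_of_nonneg_left _ hk.le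
        apply mul_le_mul_of_nonneg_left hdlen (by positivity)
      have h4 : k * (3 * Real.sqrt k * (2*d)) = 6 * (k * Real.sqrt k) * d := by ring
      linarith only [hz2np, h2, h3, h4]
    have hd3 : d ≤ ε / (24 * (k * Real.sqrt k + 1)) :=
      le_trans (min_le_right _ _) (min_le_right _ _)
    have hFτ2 : w2 τ + k * w τ ≤ ε / 4 := by
      have h4 : 6 * (k * Real.sqrt k) * d ≤ 6 * (k * Real.sqrt k) *
          (ε / (24 * (k * Real.sqrt k + 1))) :=
        mul_le_mul_of_nonneg_left hd3 (by positivity)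
      have h5 : 6 * (k * Real.sqrt k) * (ε / (24 * (k * Real.sqrt k + 1))) ≤ ε / 4 :=
        six_bound (k * Real.sqrt k) ε (mul_pos hk hrk) hcon
      exact le_trans hFτ (le_trans h4 h5)
    have hτnear := hδ hτab (hnear τ (Ioo_subset_Icc_self hτI))
    rw [Real.dist_eq] at hτnear
    have habs := (abs_lt.mp hτnear).1
    rw [← hεdef] at habs
    linarith only [hFτ2, habs, hcon]
  -- conversion to the stated inequality
  intro t ht
  have hA := key t ht
  rw [hw2def, hwdef] at hA
  simp only at hA
  have hS : 0 < Real.sin (Real.sqrt k * g t) :=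
    Real.sin_pos_of_pos_of_lt_pi (mul_pos hrk (hpos t ht))
      (lt_trans (hsmall t ht) (by linarith [Real.pi_pos]))
  rw [ge_iff_le, Real.cot_eq_cos_div_sin]
  have he : Real.sqrt k * (Real.sqrt k * (1 - g1 t ^ 2) * Real.cos (Real.sqrt k * g t) -
      g2 t * Real.sin (Real.sqrt k * g t)) =
      -(Real.cos (Real.sqrt k * g t) * (Real.sqrt k * g1 t)) * (Real.sqrt k * g1 t) +
      -Real.sin (Real.sqrt k * g t) * (Real.sqrt k * g2 t) +
      k * Real.cos (Real.sqrt k * g t) := by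
    linear_combination (Real.cos (Real.sqrt k * g t) -
      Real.cos (Real.sqrt k * g t) * g1 t ^ 2 + Real.cos (Real.sqrt k * g t) * g1 t ^ 2) * hkk
  have h2 : Real.sqrt k * (Real.sqrt k * (1 - g1 t ^ 2) * Real.cos (Real.sqrt k * g t) -
      g2 t * Real.sin (Real.sqrt k * g t)) ≤ Real.sqrt k * 0 := by
    rw [mul_zero]
    linarith [hA, he]
  have h3 : Real.sqrt k * (1 - g1 t ^ 2) * Real.cos (Real.sqrt k * g t) -
      g2 t * Real.sin (Real.sqrt k * g t) ≤ 0 := by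
    have := le_of_mul_le_mul_left h2 hrk
    linarith
  calc Real.sqrt k * (1 - g1 t ^ 2) *
        (Real.cos (Real.sqrt k * g t) / Real.sin (Real.sqrt k * g t))
      = (Real.sqrt k * (1 - g1 t ^ 2) * Real.cos (Real.sqrt k * g t)) /
        Real.sin (Real.sqrt k * g t) := by ring
    _ ≤ g2 t := by
        rw [div_le_iff₀ hS]
        linarith [h3]
end

section
/- Let k > 0, let 0 ≤ a < b with √k · b < π/2, and let g : [a,b] → ℝ be a C², positive-valued, distance-like function with √k · g(t) < π/2 for all t ∈ [a,b]. Suppose g''(t) ≤ √k·(1 − (g'(t))²)·cot(√k·g(t)) for all t ∈ [a,b]. Then for all t₁, t₂ with a ≤ t₁ < t₂ ≤ b and all u, v ∈ ℝ with u² + v² < 1/k such that g_k(t₁; u, v) = g(t₁) and g_k(t₂; u, v) = g(t₂), one has g(t) ≥ g_k(t; u, v) for all t ∈ [t₁, t₂]. -/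
open Set

set_option maxHeartbeats 1600000 in
theorem sph_comparison_of_diff_ineq_rev (k : ℝ) (hk : 0 < k) (a b : ℝ) (ha : 0 ≤ a) (hab : a < b)
    (hb : Real.sqrt k * b < Real.pi / 2) (g : ℝ → ℝ)
    (hC2 : ContDiffOn ℝ 2 g (Icc a b))
    (hpos : ∀ t ∈ Icc a b, 0 < g t)
    (hnonexp : ∀ t₁ ∈ Icc a b, ∀ t₂ ∈ Icc a b, |g t₁ - g t₂| ≤ |t₁ - t₂|)
    (hdistlike : ∀ t₁ ∈ Icc a b, ∀ t₂ ∈ Icc a b, |t₁ - t₂| ≤ g t₁ + g t₂)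
    (hsmall : ∀ t ∈ Icc a b, Real.sqrt k * g t < Real.pi / 2)
    (hineq : ∀ t ∈ Icc a b, (derivWithin (derivWithin g (Icc a b)) (Icc a b)) t ≤ Real.sqrt k * (1 - ((derivWithin g (Icc a b)) t) ^ 2) * Real.cot (Real.sqrt k * g t)) :
    ∀ t₁ t₂, a ≤ t₁ → t₁ < t₂ → t₂ ≤ b → ∀ u v : ℝ, u ^ 2 + v ^ 2 < 1 / k →
      gSph k u v t₁ = g t₁ → gSph k u v t₂ = g t₂ →
      ∀ t ∈ Icc t₁ t₂, g t ≥ gSph k u v t := by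
  intro t₁ t₂ ht₁ h12 ht₂ u v huv hgt1 hgt2 t ht
  set s : ℝ := Real.sqrt k with hsdef
  have hs0 : 0 < s := Real.sqrt_pos.2 hk
  have hsk : s * s = k := Real.mul_self_sqrt hk.le
  set I : Set ℝ := Icc a b with hIdef
  have hI : UniqueDiffOn ℝ I := uniqueDiffOn_Icc hab
  have hmem : ∀ x ∈ Icc t₁ t₂, x ∈ I := fun x hx => ⟨ht₁.trans hx.1, hx.2.trans ht₂⟩
  have ht₁I : t₁ ∈ I := ⟨ht₁, h12.le.trans ht₂⟩
  have ht₂I : t₂ ∈ I := ⟨ht₁.trans h12.le, ht₂⟩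
  have htI : t ∈ I := hmem t ht
  -- the comparison function inside arccos
  set f : ℝ → ℝ := fun x => s * (u * Real.cos (s * x) + v * Real.sin (s * x)) with hfdef
  -- |f x| < 1 everywhere
  have hf_lt : ∀ x : ℝ, |f x| < 1 := by
    intro x
    have h1 : Real.sin (s * x) ^ 2 + Real.cos (s * x) ^ 2 = 1 := Real.sin_sq_add_cos_sq _
    have h2 : (u * Real.cos (s * x) + v * Real.sin (s * x)) ^ 2 ≤ u ^ 2 + v ^ 2 := by
      nlinarith [sq_nonneg (u * Real.sin (s * x) - v * Real.cos (s * x))]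
    have h3 : (f x) ^ 2 < 1 := by
      have : (f x) ^ 2 = s * s * (u * Real.cos (s * x) + v * Real.sin (s * x)) ^ 2 := by
        simp only [hfdef]; ring
      rw [this, hsk]
      have := (lt_div_iff₀ hk).1 huv
      nlinarith [sq_nonneg (u * Real.cos (s * x) + v * Real.sin (s * x))]
    nlinarith [sq_abs (f x), abs_nonneg (f x)]
  have hf_le1 : ∀ x : ℝ, f x ≤ 1 := fun x => (abs_le.1 (hf_lt x).le).2
  have hf_ge1 : ∀ x : ℝ, -1 ≤ f x := fun x => (abs_le.1 (hf_lt x).le).1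
  -- gSph in terms of f
  have hgSph : ∀ x : ℝ, gSph k u v x = (1 / s) * Real.arccos (f x) := fun x => rfl
  -- boundary values: cos (s * g tᵢ) = f tᵢ
  have hbdry : ∀ x : ℝ, gSph k u v x = g x → Real.cos (s * g x) = f x := by
    intro x hx
    rw [hgSph] at hx
    have : Real.arccos (f x) = s * g x := by
      field_simp [hs0.ne'] at hx
      linarith [hx]
    rw [← this, Real.cos_arccos (hf_ge1 x) (hf_le1 x)]
  have hw1_0 : Real.cos (s * g t₁) = f t₁ := hbdry t₁ hgt1
  have hw2_0 : Real.cos (s * g t₂) = f t₂ := hbdry t₂ hgt2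
  -- It suffices to show cos (s * g t) ≤ f t
  suffices hwt : Real.cos (s * g t) ≤ f t by
    rw [ge_iff_le, hgSph]
    have hsg0 : 0 ≤ s * g t := mul_nonneg hs0.le (hpos t htI).le
    have hsgπ : s * g t ≤ Real.pi := le_of_lt ((hsmall t htI).trans_le (by linarith [Real.pi_pos]))
    have harc : Real.arccos (f t) ≤ s * g t := by
      calc Real.arccos (f t) ≤ Real.arccos (Real.cos (s * g t)) := by
            simp only [Real.arccos]
            have := Real.monotone_arcsin hwt
            linarith
        _ = s * g t := Real.arccos_cos hsg0 hsgπ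
    calc (1 / s) * Real.arccos (f t) ≤ (1 / s) * (s * g t) :=
          mul_le_mul_of_nonneg_left harc (by positivity)
      _ = g t := by field_simp
  -- Setting up the derivative machinery
  set d1 : ℝ → ℝ := derivWithin g I with hd1def
  set d2 : ℝ → ℝ := derivWithin d1 I with hd2def
  have hgd : ∀ x ∈ I, HasDerivWithinAt g (d1 x) I x := fun x hx =>
    ((hC2.differentiableOn (by norm_num)) x hx).hasDerivWithinAt
  have hd1C : ContDiffOn ℝ 1 d1 I := hC2.derivWithin hI (by norm_num)
  have hd1d : ∀ x ∈ I, HasDerivWithinAt d1 (d2 x) I x := fun x hx =>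
    ((hd1C.differentiableOn (by norm_num)) x hx).hasDerivWithinAt
  have hd1cont : ContinuousOn d1 I := hd1C.continuousOn
  have hgcont : ContinuousOn g I := hC2.continuousOn
  -- linear function derivative
  have hlin : ∀ x : ℝ, HasDerivAt (fun y : ℝ => s * y) s x := by
    intro x
    simpa using (hasDerivAt_id x).const_mul s
  -- f and its derivatives
  set f1 : ℝ → ℝ := fun x => s * (u * (-Real.sin (s * x) * s) + v * (Real.cos (s * x) * s))
    with hf1def
  set f2 : ℝ → ℝ := fun x =>
      s * (u * (-(Real.cos (s * x) * s) * s) + v * (-Real.sin (s * x) * s * s)) with hf2def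
  have hfd : ∀ x : ℝ, HasDerivAt f (f1 x) x := fun x =>
    ((((hlin x).cos).const_mul u).add (((hlin x).sin).const_mul v)).const_mul s
  have hf1d : ∀ x : ℝ, HasDerivAt f1 (f2 x) x := fun x =>
    (((((hlin x).sin).neg.mul_const s).const_mul u).add
      ((((hlin x).cos).mul_const s).const_mul v)).const_mul s
  have hf2k : ∀ x : ℝ, f2 x + k * f x = 0 := by
    intro x
    simp only [hf2def, hfdef]
    rw [← hsk]; ring
  -- h = cos (s * g x) and its derivatives within I
  set h : ℝ → ℝ := fun x => Real.cos (s * g x) with hhdef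
  set h1 : ℝ → ℝ := fun x => -Real.sin (s * g x) * (s * d1 x) with hh1def
  set h2 : ℝ → ℝ := fun x =>
      -(Real.cos (s * g x) * (s * d1 x)) * (s * d1 x) + -Real.sin (s * g x) * (s * d2 x)
    with hh2def
  have hsg : ∀ x ∈ I, HasDerivWithinAt (fun y => s * g y) (s * d1 x) I x := fun x hx =>
    (hgd x hx).const_mul s
  have hhd : ∀ x ∈ I, HasDerivWithinAt h (h1 x) I x := fun x hx => (hsg x hx).cos
  have hh1d : ∀ x ∈ I, HasDerivWithinAt h1 (h2 x) I x := fun x hx =>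
    ((hsg x hx).sin.neg).mul ((hd1d x hx).const_mul s)
  have hhcont : ContinuousOn h I :=
    Real.continuous_cos.comp_continuousOn (continuousOn_const.mul hgcont)
  have hh1cont : ContinuousOn h1 I :=
    ((Real.continuous_sin.comp_continuousOn (continuousOn_const.mul hgcont)).neg).mul
      (continuousOn_const.mul hd1cont)
  -- w = f - h
  set w : ℝ → ℝ := fun x => f x - h x with hwdef
  set w1 : ℝ → ℝ := fun x => f1 x - h1 x with hw1def
  set w2 : ℝ → ℝ := fun x => f2 x - h2 x with hw2def
  have hwd : ∀ x ∈ I, HasDerivWithinAt w (w1 x) I x := fun x hx =>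
    ((hfd x).hasDerivWithinAt).sub (hhd x hx)
  have hw1d : ∀ x ∈ I, HasDerivWithinAt w1 (w2 x) I x := fun x hx =>
    ((hf1d x).hasDerivWithinAt).sub (hh1d x hx)
  have hfcont : ContinuousOn f I := fun x _ => (hfd x).continuousAt.continuousWithinAt
  have hf1cont : ContinuousOn f1 I := fun x _ => (hf1d x).continuousAt.continuousWithinAt
  have hwcont : ContinuousOn w I := hfcont.sub hhcont
  have hw1cont : ContinuousOn w1 I := hf1cont.sub hh1cont
  -- w vanishes at the endpoints
  have hwt₁ : w t₁ = 0 := by simp only [hwdef, hhdef]; rw [hw1_0]; ring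
  have hwt₂ : w t₂ = 0 := by simp only [hwdef, hhdef]; rw [hw2_0]; ring
  -- key differential inequality: w2 + k * w ≤ 0 on I
  have hkey : ∀ x ∈ I, w2 x + k * w x ≤ 0 := by
    intro x hx
    have hgx : 0 < g x := hpos x hx
    have hsin : 0 < Real.sin (s * g x) :=
      Real.sin_pos_of_pos_of_lt_pi (by positivity)
        ((hsmall x hx).trans_le (by linarith [Real.pi_pos]))
    have hcot : Real.cot (s * g x) = Real.cos (s * g x) / Real.sin (s * g x) :=
      Real.cot_eq_cos_div_sin _
    have hi := hineq x hx
    rw [hcot] at hi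
    have hmul : d2 x * Real.sin (s * g x) ≤ s * (1 - d1 x ^ 2) * Real.cos (s * g x) := by
      rw [mul_div_assoc'] at hi
      exact (le_div_iff₀ hsin).1 hi
    have hh2k : 0 ≤ h2 x + k * h x := by
      simp only [hh2def, hhdef]
      rw [← hsk]
      nlinarith [mul_le_mul_of_nonneg_left hmul hs0.le]
    have hf2x := hf2k x
    simp only [hw2def, hwdef]
    linarith
  -- φ = cos (s x) and derivatives
  set φ : ℝ → ℝ := fun x => Real.cos (s * x) with hφdef
  set φ1 : ℝ → ℝ := fun x => -Real.sin (s * x) * s with hφ1def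
  have hφd : ∀ x : ℝ, HasDerivAt φ (φ1 x) x := fun x => (hlin x).cos
  have hφ1d : ∀ x : ℝ, HasDerivAt φ1 (-(Real.cos (s * x) * s) * s) x := fun x =>
    ((hlin x).sin).neg.mul_const s
  have hφpos : ∀ x ∈ I, 0 < φ x := by
    intro x hx
    apply Real.cos_pos_of_mem_Ioo
    constructor
    · have : 0 ≤ s * x := mul_nonneg hs0.le (ha.trans hx.1)
      linarith [Real.pi_pos]
    · calc s * x ≤ s * b := mul_le_mul_of_nonneg_left hx.2 hs0.le
        _ < Real.pi / 2 := hb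
  -- the Wronskian W = w1 φ - w φ1 is antitone on I
  set W : ℝ → ℝ := fun x => w1 x * φ x - w x * φ1 x with hWdef
  have hWd : ∀ x ∈ I, HasDerivWithinAt W ((w2 x + k * w x) * φ x) I x := by
    intro x hx
    have h1 : HasDerivWithinAt W
        ((w2 x * φ x + w1 x * φ1 x) - (w1 x * φ1 x + w x * (-(Real.cos (s * x) * s) * s))) I x :=
      ((hw1d x hx).mul (hφd x).hasDerivWithinAt).sub
        ((hwd x hx).mul (hφ1d x).hasDerivWithinAt)
    convert h1 using 1
    simp only [hφdef]
    rw [← hsk]; ring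
  have hφcont : ContinuousOn φ I := fun x _ => (hφd x).continuousAt.continuousWithinAt
  have hφ1cont : ContinuousOn φ1 I := fun x _ => (hφ1d x).continuousAt.continuousWithinAt
  have hWcont : ContinuousOn W I := (hw1cont.mul hφcont).sub (hwcont.mul hφ1cont)
  have hWanti : AntitoneOn W I := by
    apply antitoneOn_of_hasDerivWithinAt_nonpos (convex_Icc a b) hWcont
    · intro x hx
      rw [interior_Icc] at hx
      exact (hWd x (Ioo_subset_Icc_self hx)).mono interior_subset
    · intro x hx
      rw [interior_Icc] at hx
      have hxI : x ∈ I := Ioo_subset_Icc_self hx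
      exact mul_nonpos_of_nonpos_of_nonneg (hkey x hxI) (hφpos x hxI).le
  -- now derive w t ≥ 0 by contradiction
  by_contra hcon
  push_neg at hcon
  have hwt : w t < 0 := by simp only [hwdef, hhdef]; linarith
  have htne1 : t₁ < t := by
    rcases eq_or_lt_of_le ht.1 with h | h
    · exfalso; rw [h] at hwt₁; linarith
    · exact h
  have htne2 : t < t₂ := by
    rcases eq_or_lt_of_le ht.2 with h | h
    · exfalso; rw [h] at hwt; linarith [hwt₂]
    · exact h
  -- q = w / φ
  set q : ℝ → ℝ := fun x => w x / φ x with hqdef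
  have hqd : ∀ x ∈ Ioo t₁ t₂, HasDerivAt q (W x / φ x ^ 2) x := by
    intro x hx
    have hxI : x ∈ I := ⟨ht₁.trans hx.1.le, hx.2.le.trans ht₂⟩
    have hnbhd : I ∈ nhds x :=
      Icc_mem_nhds (lt_of_le_of_lt ht₁ hx.1) (lt_of_lt_of_le hx.2 ht₂)
    have hwx : HasDerivAt w (w1 x) x := (hwd x hxI).hasDerivAt hnbhd
    have hdiv := hwx.div (hφd x) (hφpos x hxI).ne'
    simp only [hWdef]
    exact hdiv
  have hqcont : ContinuousOn q I := hwcont.div hφcont (fun x hx => (hφpos x hx).ne')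
  have hqt₁ : q t₁ = 0 := by simp [hqdef, hwt₁]
  have hqt₂ : q t₂ = 0 := by simp [hqdef, hwt₂]
  have hqt : q t < 0 := div_neg_of_neg_of_pos hwt (hφpos t htI)
  -- MVT on [t₁, t]
  obtain ⟨c, hc, hc'⟩ := exists_hasDerivAt_eq_slope q (fun x => W x / φ x ^ 2) htne1
    (hqcont.mono (fun x hx => hmem x ⟨hx.1, hx.2.trans htne2.le⟩))
    (fun x hx => hqd x ⟨hx.1, hx.2.trans htne2⟩)
  have hWc : W c < 0 := by
    have hcI : c ∈ I := hmem c ⟨hc.1.le, hc.2.le.trans htne2.le⟩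
    have hφc : 0 < φ c ^ 2 := pow_pos (hφpos c hcI) 2
    have hslope : W c / φ c ^ 2 < 0 := by
      rw [hc']
      exact div_neg_of_neg_of_pos (by linarith) (by linarith)
    by_contra hcn
    push_neg at hcn
    linarith [div_nonneg hcn hφc.le]
  -- MVT on [t, t₂]
  obtain ⟨c', hcm, hc''⟩ := exists_hasDerivAt_eq_slope q (fun x => W x / φ x ^ 2) htne2
    (hqcont.mono (fun x hx => hmem x ⟨htne1.le.trans hx.1, hx.2⟩))
    (fun x hx => hqd x ⟨htne1.trans_le hx.1.le, hx.2⟩)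
  have hWc' : 0 < W c' := by
    have hcI : c' ∈ I := hmem c' ⟨htne1.le.trans hcm.1.le, hcm.2.le⟩
    have hφc : 0 < φ c' ^ 2 := pow_pos (hφpos c' hcI) 2
    have hslope : 0 < W c' / φ c' ^ 2 := by
      rw [hc'']
      exact div_pos (by linarith) (by linarith)
    by_contra hcn
    push_neg at hcn
    linarith [div_nonpos_of_nonpos_of_nonneg hcn hφc.le]
  -- contradiction with antitonicity
  have hcc : c < c' := hc.2.trans hcm.1
  have hcI : c ∈ I := hmem c ⟨hc.1.le, hc.2.le.trans htne2.le⟩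
  have hcI' : c' ∈ I := hmem c' ⟨htne1.le.trans hcm.1.le, hcm.2.le⟩
  have := hWanti hcI hcI' hcc.le
  linarith
end

section
/- Let k > 0, let 0 ≤ a < b with √k · b < π/2, and let g : [a,b] → ℝ be a C², positive-valued, distance-like function with √k · g(t) < π/2 for all t ∈ [a,b]. Suppose that for every t₁, t₂ with a ≤ t₁ < t₂ ≤ b there exist u, v ∈ ℝ with u² + v² < 1/k, g_k(t₁; u, v) = g(t₁), g_k(t₂; u, v) = g(t₂), and g(t) ≥ g_k(t; u, v) for all t ∈ [t₁, t₂]. Then g''(t) ≤ √k·(1 − (g'(t))²)·cot(√k·g(t)) holds for all t ∈ [a,b]. -/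
open Set

noncomputable def sA (k u v t : ℝ) : ℝ :=
  Real.sqrt k * (u * Real.cos (Real.sqrt k * t) + v * Real.sin (Real.sqrt k * t))

noncomputable def sB (k u v t : ℝ) : ℝ :=
  Real.sqrt k * (-u * Real.sin (Real.sqrt k * t) + v * Real.cos (Real.sqrt k * t))

noncomputable def sP (k u v t : ℝ) : ℝ :=
  -sB k u v t / Real.sqrt (1 - (sA k u v t) ^ 2)

noncomputable def sQ (k u v t : ℝ) : ℝ :=
  Real.sqrt k * (1 - (sA k u v t) ^ 2 - (sB k u v t) ^ 2) * sA k u v t /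
    ((1 - (sA k u v t) ^ 2) * Real.sqrt (1 - (sA k u v t) ^ 2))

lemma sAB_sq {k : ℝ} (hk : 0 < k) (u v t : ℝ) :
    (sA k u v t) ^ 2 + (sB k u v t) ^ 2 = k * (u ^ 2 + v ^ 2) := by
  have h := Real.sin_sq_add_cos_sq (Real.sqrt k * t)
  have hkk : Real.sqrt k ^ 2 = k := Real.sq_sqrt hk.le
  simp only [sA, sB]
  linear_combination ((u^2+v^2)*(Real.sin (Real.sqrt k*t)^2 + Real.cos (Real.sqrt k*t)^2)) * hkk +
    k*(u^2+v^2) * h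

lemma sA_sq_lt {k u v : ℝ} (hk : 0 < k) (hc : u ^ 2 + v ^ 2 < 1 / k) (t : ℝ) :
    (sA k u v t) ^ 2 < 1 := by
  have h1 := sAB_sq hk u v t
  have h2 : k * (u ^ 2 + v ^ 2) < k * (1 / k) := mul_lt_mul_of_pos_left hc hk
  rw [mul_one_div, div_self hk.ne'] at h2
  nlinarith [sq_nonneg (sB k u v t)]

lemma sP_sq_le {k u v : ℝ} (hk : 0 < k) (hc : u ^ 2 + v ^ 2 < 1 / k) (t : ℝ) :
    (sP k u v t) ^ 2 ≤ k * (u ^ 2 + v ^ 2) := by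
  have h1 := sAB_sq hk u v t
  have h2 := sA_sq_lt hk hc t
  have h3 : (0:ℝ) < 1 - (sA k u v t) ^ 2 := by linarith
  have h4 : Real.sqrt (1 - (sA k u v t) ^ 2) ^ 2 = 1 - (sA k u v t) ^ 2 := Real.sq_sqrt h3.le
  have h5 : (0:ℝ) < Real.sqrt (1 - (sA k u v t) ^ 2) := Real.sqrt_pos.mpr h3
  have hklt : k * (u ^ 2 + v ^ 2) < 1 := by
    have h2' : k * (u ^ 2 + v ^ 2) < k * (1 / k) := mul_lt_mul_of_pos_left hc hk
    rwa [mul_one_div, div_self hk.ne'] at h2'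
  have : (sP k u v t) ^ 2 = (sB k u v t) ^ 2 / (1 - (sA k u v t) ^ 2) := by
    rw [sP, div_pow, neg_sq, h4]
  rw [this, div_le_iff₀ h3]
  nlinarith [mul_nonneg (sq_nonneg (sA k u v t)) (by linarith : (0:ℝ) ≤ 1 - k * (u^2+v^2))]

lemma hasDerivAt_sqt (k t : ℝ) : HasDerivAt (fun s : ℝ => Real.sqrt k * s) (Real.sqrt k) t := by
  simpa using (hasDerivAt_id t).const_mul (Real.sqrt k)

lemma hasDerivAt_sA {k : ℝ} (hk : 0 < k) (u v t : ℝ) :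
    HasDerivAt (sA k u v) (Real.sqrt k * sB k u v t) t := by
  have h1 : HasDerivAt (fun s : ℝ => Real.cos (Real.sqrt k * s))
      (-Real.sin (Real.sqrt k * t) * Real.sqrt k) t := (hasDerivAt_sqt k t).cos
  have h2 : HasDerivAt (fun s : ℝ => Real.sin (Real.sqrt k * s))
      (Real.cos (Real.sqrt k * t) * Real.sqrt k) t := (hasDerivAt_sqt k t).sin
  have := (((h1.const_mul u).add (h2.const_mul v)).const_mul (Real.sqrt k))
  refine this.congr_deriv ?_
  simp only [sB]; ring

lemma hasDerivAt_sB {k : ℝ} (hk : 0 < k) (u v t : ℝ) :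
    HasDerivAt (sB k u v) (-(Real.sqrt k * sA k u v t)) t := by
  have h1 : HasDerivAt (fun s : ℝ => Real.cos (Real.sqrt k * s))
      (-Real.sin (Real.sqrt k * t) * Real.sqrt k) t := (hasDerivAt_sqt k t).cos
  have h2 : HasDerivAt (fun s : ℝ => Real.sin (Real.sqrt k * s))
      (Real.cos (Real.sqrt k * t) * Real.sqrt k) t := (hasDerivAt_sqt k t).sin
  have := (((h2.const_mul (-u)).add (h1.const_mul v)).const_mul (Real.sqrt k))
  refine this.congr_deriv ?_
  simp only [sA]; ring

lemma gSph_eq (k u v t : ℝ) :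
    gSph k u v t = (1 / Real.sqrt k) * Real.arccos (sA k u v t) := rfl

lemma hasDerivAt_gSph {k u v : ℝ} (hk : 0 < k) (hc : u ^ 2 + v ^ 2 < 1 / k) (t : ℝ) :
    HasDerivAt (gSph k u v) (sP k u v t) t := by
  have hA2 := sA_sq_lt hk hc t
  have hne1 : sA k u v t ≠ 1 := by nlinarith
  have hnem1 : sA k u v t ≠ -1 := by nlinarith
  have harc : HasDerivAt Real.arccos (-(1 / Real.sqrt (1 - sA k u v t ^ 2))) (sA k u v t) :=
    (Real.hasStrictDerivAt_arccos hnem1 hne1).hasDerivAt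
  have := ((harc.comp t (hasDerivAt_sA hk u v t)).const_mul (1 / Real.sqrt k))
  have hksqrt : Real.sqrt k ≠ 0 := by positivity
  refine this.congr_deriv ?_
  simp only [sP]
  field_simp

lemma hasDerivAt_sP {k u v : ℝ} (hk : 0 < k) (hc : u ^ 2 + v ^ 2 < 1 / k) (t : ℝ) :
    HasDerivAt (sP k u v) (sQ k u v t) t := by
  have hA2 := sA_sq_lt hk hc t
  have h3 : (0:ℝ) < 1 - (sA k u v t) ^ 2 := by linarith
  have h5 : (0:ℝ) < Real.sqrt (1 - (sA k u v t) ^ 2) := Real.sqrt_pos.mpr h3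
  have h4 : Real.sqrt (1 - (sA k u v t) ^ 2) ^ 2 = 1 - (sA k u v t) ^ 2 := Real.sq_sqrt h3.le
  have hnum : HasDerivAt (fun s => -sB k u v s) (Real.sqrt k * sA k u v t) t := by
    exact (hasDerivAt_sB hk u v t).neg.congr_deriv (neg_neg _)
  have hinner : HasDerivAt (fun s => 1 - (sA k u v s) ^ 2)
      (-(2 * sA k u v t * (Real.sqrt k * sB k u v t))) t := by
    have := ((hasDerivAt_sA hk u v t).pow 2).const_sub 1
    refine this.congr_deriv ?_
    ring
  have hden : HasDerivAt (fun s => Real.sqrt (1 - (sA k u v s) ^ 2))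
      ((-(2 * sA k u v t * (Real.sqrt k * sB k u v t))) / (2 * Real.sqrt (1 - (sA k u v t) ^ 2)))
      t := hinner.sqrt h3.ne'
  have := hnum.div hden h5.ne'
  refine this.congr_deriv ?_
  simp only [sQ]
  rw [div_eq_div_iff (by positivity) (by positivity)]
  field_simp
  linear_combination (sA k u v t * sB k u v t ^ 2) * h4

lemma sQ_eq {k u v : ℝ} (hk : 0 < k) (hc : u ^ 2 + v ^ 2 < 1 / k) (t : ℝ) :
    sQ k u v t = Real.sqrt k * (1 - (sP k u v t) ^ 2) *
      Real.cot (Real.sqrt k * gSph k u v t) := by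
  have hA2 := sA_sq_lt hk hc t
  have h3 : (0:ℝ) < 1 - (sA k u v t) ^ 2 := by linarith
  have h5 : (0:ℝ) < Real.sqrt (1 - (sA k u v t) ^ 2) := Real.sqrt_pos.mpr h3
  have h4 : Real.sqrt (1 - (sA k u v t) ^ 2) ^ 2 = 1 - (sA k u v t) ^ 2 := Real.sq_sqrt h3.le
  have hksqrt : Real.sqrt k ≠ 0 := by positivity
  have harc : Real.sqrt k * gSph k u v t = Real.arccos (sA k u v t) := by
    rw [gSph_eq]; field_simp
  have hm1 : (-1:ℝ) ≤ sA k u v t := by nlinarith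
  have hp1 : sA k u v t ≤ 1 := by nlinarith
  rw [sQ, sP, harc, Real.cot_eq_cos_div_sin, Real.sin_arccos, Real.cos_arccos hm1 hp1]
  have hrw : 1 - (-sB k u v t / Real.sqrt (1 - sA k u v t ^ 2)) ^ 2
      = (1 - sA k u v t ^ 2 - sB k u v t ^ 2) / (1 - sA k u v t ^ 2) := by
    rw [div_pow, neg_sq, h4]
    field_simp
  rw [hrw]
  field_simp

lemma sP_abs_le {k u v : ℝ} (hk : 0 < k) (hc : u ^ 2 + v ^ 2 < 1 / k) (t : ℝ) :
    |sP k u v t| ≤ 1 := by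
  have h1 := sP_sq_le hk hc t
  have h2 : k * (u ^ 2 + v ^ 2) < k * (1 / k) := mul_lt_mul_of_pos_left hc hk
  rw [mul_one_div, div_self hk.ne'] at h2
  rw [← sq_le_one_iff_abs_le_one]
  linarith

lemma gSph_lip {k u v : ℝ} (hk : 0 < k) (hc : u ^ 2 + v ^ 2 < 1 / k) (s t : ℝ) :
    |gSph k u v s - gSph k u v t| ≤ |s - t| := by
  have := Convex.norm_image_sub_le_of_norm_hasDerivWithin_le
    (f := gSph k u v) (f' := sP k u v) (C := 1) (s := Set.univ)
    (fun x _ => (hasDerivAt_gSph hk hc x).hasDerivWithinAt)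
    (fun x _ => by simpa [Real.norm_eq_abs] using sP_abs_le hk hc x)
    convex_univ (Set.mem_univ t) (Set.mem_univ s)
  simpa [Real.norm_eq_abs] using this

lemma cot_le_bound {x y : ℝ} (hx : 0 < x) (hxy : x ≤ y) (hy : y < Real.pi / 2) :
    Real.cot y ≤ 1 / Real.sin x := by
  have hpi := Real.pi_pos
  have hsx : 0 < Real.sin x := Real.sin_pos_of_pos_of_lt_pi hx (by linarith)
  have hsy : 0 < Real.sin y := Real.sin_pos_of_pos_of_lt_pi (by linarith) (by linarith)
  have hmono : Real.sin x ≤ Real.sin y := by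
    apply Real.strictMonoOn_sin.monotoneOn ⟨by linarith, by linarith⟩ ⟨by linarith, by linarith⟩ hxy
  rw [Real.cot_eq_cos_div_sin]
  exact div_le_div₀ zero_le_one (Real.cos_le_one y) hsx hmono

set_option maxHeartbeats 1000000 in
theorem diff_ineq_rev_of_sph_comparison (k : ℝ) (hk : 0 < k) (a b : ℝ) (ha : 0 ≤ a) (hab : a < b)
    (hb : Real.sqrt k * b < Real.pi / 2) (g : ℝ → ℝ)
    (hC2 : ContDiffOn ℝ 2 g (Icc a b))
    (hpos : ∀ t ∈ Icc a b, 0 < g t)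
    (hnonexp : ∀ t₁ ∈ Icc a b, ∀ t₂ ∈ Icc a b, |g t₁ - g t₂| ≤ |t₁ - t₂|)
    (hdistlike : ∀ t₁ ∈ Icc a b, ∀ t₂ ∈ Icc a b, |t₁ - t₂| ≤ g t₁ + g t₂)
    (hsmall : ∀ t ∈ Icc a b, Real.sqrt k * g t < Real.pi / 2)
    (hcmp : ∀ t₁ t₂, a ≤ t₁ → t₁ < t₂ → t₂ ≤ b →
      ∃ u v : ℝ, u ^ 2 + v ^ 2 < 1 / k ∧
      gSph k u v t₁ = g t₁ ∧ gSph k u v t₂ = g t₂ ∧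
      ∀ t ∈ Icc t₁ t₂, g t ≥ gSph k u v t) :
    ∀ t ∈ Icc a b, (derivWithin (derivWithin g (Icc a b)) (Icc a b)) t ≤ Real.sqrt k * (1 - ((derivWithin g (Icc a b)) t) ^ 2) * Real.cot (Real.sqrt k * g t) := by
  intro t₀ ht₀
  set G1 : ℝ → ℝ := derivWithin g (Icc a b) with hG1def
  set G2 : ℝ → ℝ := derivWithin G1 (Icc a b) with hG2def
  by_contra hcon
  push_neg at hcon
  have hksqrt : (0:ℝ) < Real.sqrt k := Real.sqrt_pos.mpr hk
  have hud : UniqueDiffOn ℝ (Icc a b) := uniqueDiffOn_Icc hab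
  have hC1' : ContDiffOn ℝ 1 G1 (Icc a b) := hC2.derivWithin hud (by norm_num)
  have hG1cont : ContinuousOn G1 (Icc a b) := hC1'.continuousOn
  have hG2cont : ContinuousOn G2 (Icc a b) := hC1'.continuousOn_derivWithin hud le_rfl
  have hgdiff : DifferentiableOn ℝ g (Icc a b) := hC2.differentiableOn (by norm_num)
  have hG1diff : DifferentiableOn ℝ G1 (Icc a b) := hC1'.differentiableOn one_ne_zero
  have hg0pos : 0 < g t₀ := hpos t₀ ht₀
  have hg0small : Real.sqrt k * g t₀ < Real.pi / 2 := hsmall t₀ ht₀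
  have hpi := Real.pi_pos
  have hsin0 : 0 < Real.sin (Real.sqrt k * g t₀) :=
    Real.sin_pos_of_pos_of_lt_pi (by positivity) (by linarith)
  set R : ℝ := Real.sqrt k * (1 - (G1 t₀) ^ 2) * Real.cot (Real.sqrt k * g t₀) with hRdef
  set M : ℝ := (R + G2 t₀) / 2 with hMdef
  have hRM : R < M := by simp only [hMdef]; linarith
  have hMG : M < G2 t₀ := by simp only [hMdef]; linarith
  -- continuity of the comparison expression
  have hδ' : ∃ δ' > 0, ∀ x y : ℝ, |x - G1 t₀| < δ' → |y - g t₀| < δ' →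
      Real.sqrt k * (1 - x ^ 2) * Real.cot (Real.sqrt k * y) < M := by
    set F : ℝ × ℝ → ℝ := fun z => Real.sqrt k * (1 - z.1 ^ 2) *
      (Real.cos (Real.sqrt k * z.2) / Real.sin (Real.sqrt k * z.2)) with hFdef
    have hFcont : ContinuousAt F (G1 t₀, g t₀) := by
      apply ContinuousAt.mul
      · exact ((continuous_const.mul
          (continuous_const.sub (continuous_fst.pow 2)))).continuousAt
      · apply ContinuousAt.div
        · exact (Real.continuous_cos.comp (continuous_const.mul continuous_snd)).continuousAt
        · exact (Real.continuous_sin.comp (continuous_const.mul continuous_snd)).continuousAt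
        · exact hsin0.ne'
    have hFval : F (G1 t₀, g t₀) = R := by
      rw [hFdef, hRdef, Real.cot_eq_cos_div_sin]
    have hFlt : F (G1 t₀, g t₀) < M := by rw [hFval]; exact hRM
    have hmem : F ⁻¹' (Iio M) ∈ nhds ((G1 t₀, g t₀) : ℝ × ℝ) :=
      hFcont.preimage_mem_nhds (Iio_mem_nhds hFlt)
    rw [Metric.mem_nhds_iff] at hmem
    obtain ⟨ε, hεpos, hball⟩ := hmem
    refine ⟨ε, hεpos, fun x y hx hy => ?_⟩
    have hin : ((x, y) : ℝ × ℝ) ∈ Metric.ball ((G1 t₀, g t₀) : ℝ × ℝ) ε := by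
      rw [Metric.mem_ball, Prod.dist_eq]
      apply max_lt <;> rw [Real.dist_eq] <;> assumption
    have := hball hin
    rw [mem_preimage, mem_Iio, hFdef] at this
    rwa [Real.cot_eq_cos_div_sin]
  obtain ⟨δ', hδ'pos, hδ'prop⟩ := hδ'
  -- continuity of G1 and G2 at t₀ within Icc a b
  have hr : ∃ r > 0, ∀ t ∈ Icc a b, |t - t₀| < r → M < G2 t ∧ |G1 t - G1 t₀| < δ' / 4 := by
    have h2 := Metric.continuousWithinAt_iff.mp (hG2cont t₀ ht₀) (G2 t₀ - M) (by linarith)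
    have h1 := Metric.continuousWithinAt_iff.mp (hG1cont t₀ ht₀) (δ' / 4) (by linarith)
    obtain ⟨δ₁, hδ₁pos, hδ₁⟩ := h2
    obtain ⟨δ₂, hδ₂pos, hδ₂⟩ := h1
    refine ⟨min δ₁ δ₂, lt_min hδ₁pos hδ₂pos, fun t ht hdist => ⟨?_, ?_⟩⟩
    · have := hδ₁ ht (by rw [Real.dist_eq]; exact lt_of_lt_of_le hdist (min_le_left _ _))
      rw [Real.dist_eq, abs_lt] at this
      linarith [this.1]
    · have := hδ₂ ht (by rw [Real.dist_eq]; exact lt_of_lt_of_le hdist (min_le_right _ _))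
      rwa [Real.dist_eq] at this
  obtain ⟨r, hrpos, hrprop⟩ := hr
  have hsin2 : 0 < Real.sin (Real.sqrt k * (g t₀ / 2)) := by
    apply Real.sin_pos_of_pos_of_lt_pi (mul_pos hksqrt (by linarith))
    nlinarith
  set K₀ : ℝ := Real.sqrt k / Real.sin (Real.sqrt k * (g t₀ / 2)) with hK₀def
  have hK₀pos : 0 < K₀ := by positivity
  set Δ : ℝ := min (min (δ' / 4) (δ' / (4 * K₀))) (min (g t₀ / 4) (min (r / 2) ((b - a) / 2)))
    with hΔdef
  have hΔpos : 0 < Δ := by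
    apply lt_min (lt_min (by linarith) (div_pos hδ'pos (by linarith)))
      (lt_min (by linarith) (lt_min (by linarith) (by linarith)))
  have hΔ1 : Δ ≤ δ' / 4 := le_trans (min_le_left _ _) (min_le_left _ _)
  have hΔ2 : K₀ * Δ ≤ δ' / 4 := by
    have h : Δ ≤ δ' / (4 * K₀) := le_trans (min_le_left _ _) (min_le_right _ _)
    calc K₀ * Δ ≤ K₀ * (δ' / (4 * K₀)) := mul_le_mul_of_nonneg_left h hK₀pos.le
      _ = δ' / 4 := by field_simp
  have hΔ3 : Δ ≤ g t₀ / 4 := le_trans (min_le_right _ _) (min_le_left _ _)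
  have hΔ4 : Δ < r := by
    have h : Δ ≤ r / 2 :=
      le_trans (min_le_right _ _) (le_trans (min_le_right _ _) (min_le_left _ _))
    linarith
  have hΔ5 : Δ ≤ (b - a) / 2 :=
    le_trans (min_le_right _ _) (le_trans (min_le_right _ _) (min_le_right _ _))
  -- choice of the interval
  obtain ⟨t₁, t₂, h1a, h12, h2b, ht01, ht02, hΔeq⟩ :
      ∃ t₁ t₂, a ≤ t₁ ∧ t₁ < t₂ ∧ t₂ ≤ b ∧ t₁ ≤ t₀ ∧ t₀ ≤ t₂ ∧ t₂ - t₁ = Δ := by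
    rcases le_or_gt (t₀ + Δ) b with hcase | hcase
    · exact ⟨t₀, t₀ + Δ, ht₀.1, by linarith, hcase, le_refl _, by linarith, by ring⟩
    · refine ⟨t₀ - Δ, t₀, ?_, by linarith, ht₀.2, by linarith, le_refl _, by ring⟩
      have := ht₀.2
      linarith
  have hsub : Icc t₁ t₂ ⊆ Icc a b := Icc_subset_Icc h1a h2b
  have hnear : ∀ t ∈ Icc t₁ t₂, |t - t₀| ≤ Δ := by
    intro t ht
    rw [abs_le]
    obtain ⟨h1, h2⟩ := ht
    constructor <;> linarith
  obtain ⟨u, v, huv, he1, he2, hge⟩ := hcmp t₁ t₂ h1a h12 h2b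
  -- facts about the comparison function on [t₁, t₂]
  have hφle : ∀ t ∈ Icc t₁ t₂, gSph k u v t ≤ g t := fun t ht => hge t ht
  have hφsmall : ∀ t ∈ Icc t₁ t₂, Real.sqrt k * gSph k u v t < Real.pi / 2 := by
    intro t ht
    calc Real.sqrt k * gSph k u v t ≤ Real.sqrt k * g t := by
          apply mul_le_mul_of_nonneg_left (hφle t ht) hksqrt.le
      _ < Real.pi / 2 := hsmall t (hsub ht)
  have hA_pos : ∀ t ∈ Icc t₁ t₂, 0 < sA k u v t := by
    intro t ht
    have harc : Real.sqrt k * gSph k u v t = Real.arccos (sA k u v t) := by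
      rw [gSph_eq]; field_simp
    have := hφsmall t ht
    rw [harc] at this
    exact Real.arccos_lt_pi_div_two.mp this
  have hq_nonneg : ∀ t ∈ Icc t₁ t₂, 0 ≤ sQ k u v t := by
    intro t ht
    have hA2 := sA_sq_lt hk huv t
    have hAB := sAB_sq hk u v t
    have hklt : k * (u ^ 2 + v ^ 2) < 1 := by
      have h2' : k * (u ^ 2 + v ^ 2) < k * (1 / k) := mul_lt_mul_of_pos_left huv hk
      rwa [mul_one_div, div_self hk.ne'] at h2'
    rw [sQ]
    have h3 : (0:ℝ) < 1 - sA k u v t ^ 2 := by linarith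
    have h5 := Real.sqrt_pos.mpr h3
    apply div_nonneg _ (mul_pos h3 h5).le
    have h1 : 0 ≤ 1 - sA k u v t ^ 2 - sB k u v t ^ 2 := by linarith
    exact mul_nonneg (mul_nonneg hksqrt.le h1) (hA_pos t ht).le
  -- monotonicity of sP on [t₁, t₂]
  have hpmono : MonotoneOn (sP k u v) (Icc t₁ t₂) := by
    apply monotoneOn_of_deriv_nonneg (convex_Icc t₁ t₂)
    · exact fun t _ => (hasDerivAt_sP hk huv t).differentiableAt.continuousAt.continuousWithinAt
    · intro t ht
      exact (hasDerivAt_sP hk huv t).differentiableAt.differentiableWithinAt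
    · intro t ht
      rw [interior_Icc] at ht
      rw [(hasDerivAt_sP hk huv t).deriv]
      exact hq_nonneg t (Ioo_subset_Icc_self ht)
  -- Lipschitz estimates for gSph on the interval
  have ht₁ab : t₁ ∈ Icc a b := hsub ⟨le_refl t₁, h12.le⟩
  have ht₂ab : t₂ ∈ Icc a b := hsub ⟨h12.le, le_refl t₂⟩
  have hgt₁ : |g t₁ - g t₀| ≤ Δ :=
    (hnonexp t₁ ht₁ab t₀ ht₀).trans (hnear t₁ ⟨le_refl _, h12.le⟩)
  have hφ_close : ∀ t ∈ Icc t₁ t₂, |gSph k u v t - g t₀| ≤ 2 * Δ := by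
    intro t ht
    have h1 : |gSph k u v t - gSph k u v t₁| ≤ |t - t₁| := gSph_lip hk huv t t₁
    have h2 : |t - t₁| ≤ Δ := by
      rw [abs_of_nonneg (by linarith [ht.1])]
      linarith [ht.2]
    rw [he1] at h1
    calc |gSph k u v t - g t₀| ≤ |gSph k u v t - g t₁| + |g t₁ - g t₀| := abs_sub_le _ _ _
      _ ≤ 2 * Δ := by linarith [h1.trans h2]
  have hφ_lb : ∀ t ∈ Icc t₁ t₂, g t₀ / 2 ≤ gSph k u v t := by
    intro t ht
    have h := abs_le.mp (hφ_close t ht)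
    linarith [h.1]
  -- upper bound on sQ over the interval
  have hq_bd : ∀ t ∈ Icc t₁ t₂, sQ k u v t ≤ K₀ := by
    intro t ht
    rw [sQ_eq hk huv t]
    have hφt_pos : 0 < gSph k u v t := lt_of_lt_of_le (by linarith) (hφ_lb t ht)
    have hx1 : 0 < Real.sqrt k * gSph k u v t := mul_pos hksqrt hφt_pos
    have hcotle : Real.cot (Real.sqrt k * gSph k u v t) ≤
        1 / Real.sin (Real.sqrt k * (g t₀ / 2)) :=
      cot_le_bound (mul_pos hksqrt (by linarith))
        (mul_le_mul_of_nonneg_left (hφ_lb t ht) hksqrt.le) (hφsmall t ht)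
    have hcot0 : 0 ≤ Real.cot (Real.sqrt k * gSph k u v t) := by
      rw [Real.cot_eq_cos_div_sin]
      apply div_nonneg
      · apply Real.cos_nonneg_of_mem_Icc
        constructor
        · linarith [(hφsmall t ht).le, hx1.le]
        · exact (hφsmall t ht).le
      · exact (Real.sin_pos_of_pos_of_lt_pi hx1 (by linarith [hφsmall t ht])).le
    have hp2le : (sP k u v t) ^ 2 ≤ 1 :=
      (sq_le_one_iff_abs_le_one (sP k u v t)).mpr (sP_abs_le hk huv t)
    have h1p : 0 ≤ 1 - (sP k u v t) ^ 2 := by linarith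
    calc Real.sqrt k * (1 - (sP k u v t) ^ 2) * Real.cot (Real.sqrt k * gSph k u v t)
        ≤ Real.sqrt k * 1 * (1 / Real.sin (Real.sqrt k * (g t₀ / 2))) := by
          apply mul_le_mul _ hcotle hcot0 (by positivity)
          apply mul_le_mul_of_nonneg_left (by linarith [sq_nonneg (sP k u v t)]) hksqrt.le
      _ = K₀ := by rw [hK₀def]; ring
  -- endpoint derivative comparisons via slopes
  have hgd : ∀ t ∈ Icc t₁ t₂, HasDerivWithinAt g (G1 t) (Icc t₁ t₂) t := fun t ht =>
    ((hgdiff t (hsub ht)).hasDerivWithinAt).mono hsub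
  have hslope1 : sP k u v t₁ ≤ G1 t₁ := by
    have hd : HasDerivWithinAt (fun t => g t - gSph k u v t) (G1 t₁ - sP k u v t₁)
        (Icc t₁ t₂) t₁ :=
      (hgd t₁ ⟨le_refl _, h12.le⟩).sub (hasDerivAt_gSph hk huv t₁).hasDerivWithinAt
    rw [hasDerivWithinAt_iff_tendsto_slope] at hd
    have hIoc : Icc t₁ t₂ \ {t₁} = Ioc t₁ t₂ := Icc_diff_left
    rw [hIoc] at hd
    haveI : (nhdsWithin t₁ (Ioc t₁ t₂)).NeBot := by
      apply mem_closure_iff_nhdsWithin_neBot.mp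
      rw [closure_Ioc h12.ne]
      exact ⟨le_refl _, h12.le⟩
    have h0 : 0 ≤ G1 t₁ - sP k u v t₁ := by
      apply ge_of_tendsto hd
      filter_upwards [self_mem_nhdsWithin] with t ht
      have ht' : t ∈ Icc t₁ t₂ := Ioc_subset_Icc_self ht
      have hnum : 0 ≤ (g t - gSph k u v t) - (g t₁ - gSph k u v t₁) := by
        rw [he1]
        simp only [sub_self, sub_zero, sub_nonneg]
        exact hφle t ht'
      have hden : 0 < t - t₁ := by linarith [ht.1]
      rw [slope_def_field]
      exact div_nonneg hnum hden.le
    linarith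
  have hslope2 : G1 t₂ ≤ sP k u v t₂ := by
    have hd : HasDerivWithinAt (fun t => g t - gSph k u v t) (G1 t₂ - sP k u v t₂)
        (Icc t₁ t₂) t₂ :=
      (hgd t₂ ⟨h12.le, le_refl _⟩).sub (hasDerivAt_gSph hk huv t₂).hasDerivWithinAt
    rw [hasDerivWithinAt_iff_tendsto_slope] at hd
    have hIco : Icc t₁ t₂ \ {t₂} = Ico t₁ t₂ := Icc_sdiff_right
    rw [hIco] at hd
    haveI : (nhdsWithin t₂ (Ico t₁ t₂)).NeBot := by
      apply mem_closure_iff_nhdsWithin_neBot.mp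
      rw [closure_Ico h12.ne]
      exact ⟨h12.le, le_refl _⟩
    have h0 : G1 t₂ - sP k u v t₂ ≤ 0 := by
      apply le_of_tendsto hd
      filter_upwards [self_mem_nhdsWithin] with t ht
      have ht' : t ∈ Icc t₁ t₂ := Ico_subset_Icc_self ht
      have hnum : 0 ≤ (g t - gSph k u v t) - (g t₂ - gSph k u v t₂) := by
        rw [he2]
        simp only [sub_self, sub_zero, sub_nonneg]
        exact hφle t ht'
      have hden : t - t₂ < 0 := by linarith [ht.2]
      rw [slope_def_field]
      exact div_nonpos_of_nonneg_of_nonpos hnum hden.le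
    linarith
  -- mean value theorem applications
  have hG1contS : ContinuousOn G1 (Icc t₁ t₂) := hG1cont.mono hsub
  have hG1deriv : ∀ x ∈ Ioo t₁ t₂, HasDerivAt G1 (G2 x) x := by
    intro x hx
    have hxab : x ∈ Ioo a b := ⟨lt_of_le_of_lt h1a hx.1, lt_of_lt_of_le hx.2 h2b⟩
    exact ((hG1diff x (Ioo_subset_Icc_self hxab)).hasDerivWithinAt).hasDerivAt
      (Icc_mem_nhds hxab.1 hxab.2)
  obtain ⟨ξ, hξ, hξeq⟩ := exists_hasDerivAt_eq_slope G1 G2 h12 hG1contS hG1deriv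
  have hpcont : ContinuousOn (sP k u v) (Icc t₁ t₂) := fun t _ =>
    (hasDerivAt_sP hk huv t).differentiableAt.continuousAt.continuousWithinAt
  obtain ⟨ζ, hζ, hζeq⟩ := exists_hasDerivAt_eq_slope (sP k u v) (sQ k u v) h12 hpcont
    (fun x _ => hasDerivAt_sP hk huv x)
  have hξab : ξ ∈ Icc a b := hsub (Ioo_subset_Icc_self hξ)
  have hξnear : |ξ - t₀| < r := (hnear ξ (Ioo_subset_Icc_self hξ)).trans_lt hΔ4
  have hG2ξ : M < G2 ξ := (hrprop ξ hξab hξnear).1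
  have hζI : ζ ∈ Icc t₁ t₂ := Ioo_subset_Icc_self hζ
  have hqζK : sQ k u v ζ ≤ K₀ := hq_bd ζ hζI
  have hqζ0 : 0 ≤ sQ k u v ζ := hq_nonneg ζ hζI
  have hsub12 : (0:ℝ) < t₂ - t₁ := by linarith
  have hG2le : G2 ξ ≤ sQ k u v ζ := by
    rw [hξeq, hζeq]
    apply (div_le_div_iff_of_pos_right hsub12).mpr
    linarith [hslope1, hslope2]
  have hpdiff : sP k u v t₂ - sP k u v t₁ = sQ k u v ζ * Δ := by
    rw [eq_div_iff hsub12.ne'] at hζeq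
    rw [← hζeq, hΔeq]
  have hG1t₁ : |G1 t₁ - G1 t₀| < δ' / 4 :=
    (hrprop t₁ ht₁ab ((hnear t₁ ⟨le_refl _, h12.le⟩).trans_lt hΔ4)).2
  have hG1t₂ : |G1 t₂ - G1 t₀| < δ' / 4 :=
    (hrprop t₂ ht₂ab ((hnear t₂ ⟨h12.le, le_refl _⟩).trans_lt hΔ4)).2
  have hqΔ : sQ k u v ζ * Δ ≤ δ' / 4 :=
    le_trans (mul_le_mul_of_nonneg_right hqζK hΔpos.le) hΔ2
  have hqΔ0 : 0 ≤ sQ k u v ζ * Δ := mul_nonneg hqζ0 hΔpos.le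
  have hpζ1 : sP k u v t₁ ≤ sP k u v ζ :=
    hpmono ⟨le_refl _, h12.le⟩ hζI hζI.1
  have hpζ2 : sP k u v ζ ≤ sP k u v t₂ :=
    hpmono hζI ⟨h12.le, le_refl _⟩ hζI.2
  have hpub : sP k u v ζ ≤ G1 t₀ + δ' / 2 := by
    have := abs_lt.mp hG1t₁
    linarith [hpζ2, hpdiff, hslope1]
  have hplb : G1 t₀ - δ' / 2 ≤ sP k u v ζ := by
    have := abs_lt.mp hG1t₂
    linarith [hpζ1, hpdiff, hslope2]
  -- final contradiction
  have hfin : sQ k u v ζ < M := by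
    rw [sQ_eq hk huv ζ]
    apply hδ'prop
    · rw [abs_lt]; constructor <;> linarith
    · have h := abs_le.mp (hφ_close ζ hζI)
      rw [abs_lt]
      constructor <;> linarith [hΔ1, h.1, h.2]
  linarith
end

section
/- Let k > 0, let 0 ≤ a < b with √k · b < π/2, and let g : [a,b] → ℝ be a C², positive-valued function with √k · g(t) < π/2 for all t ∈ [a,b]. Define H : [a,b] → ℝ by H(t) = g'(t) cos(√k t) sin(√k g(t)) − sin(√k t) cos(√k g(t)). Then for all t ∈ [a,b], H'(t) = cos(√k t) ( sin(√k g(t)) · g''(t) + √k · cos(√k g(t)) · ((g'(t))² − 1) ). In particular, H'(t) ≥ 0 for all t ∈ [a,b] if and only if g''(t) ≥ √k·(1 − (g'(t))²)·cot(√k·g(t)) for all t ∈ [a,b]. -/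
open Set

/-- For `k > 0` and a C², positive `g` on `[a,b] ⊆ [0, π/(2√k))` with `√k g < π/2`, the auxiliary
function `H t = g' t cos(√k t) sin(√k g t) - sin(√k t) cos(√k g t)` has derivative
`H' t = cos(√k t) (sin(√k g t) g'' t + √k cos(√k g t) ((g' t)² - 1))`,
and `H' ≥ 0` on `[a,b]` iff `g'' ≥ √k (1 - (g')²) cot(√k g)` on `[a,b]`. -/
theorem sph_auxiliary_derivative (k : ℝ) (hk : 0 < k) (a b : ℝ) (ha : 0 ≤ a) (hab : a < b)
    (hb : Real.sqrt k * b < Real.pi / 2) (g H : ℝ → ℝ)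
    (hC2 : ContDiffOn ℝ 2 g (Icc a b))
    (hpos : ∀ t ∈ Icc a b, 0 < g t)
    (hsmall : ∀ t ∈ Icc a b, Real.sqrt k * g t < Real.pi / 2)
    (hH : ∀ t, H t = derivWithin g (Icc a b) t * Real.cos (Real.sqrt k * t) *
      Real.sin (Real.sqrt k * g t) - Real.sin (Real.sqrt k * t) * Real.cos (Real.sqrt k * g t)) :
    (∀ t ∈ Icc a b, derivWithin H (Icc a b) t =
      Real.cos (Real.sqrt k * t) *
        (Real.sin (Real.sqrt k * g t) * derivWithin (derivWithin g (Icc a b)) (Icc a b) t +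
          Real.sqrt k * Real.cos (Real.sqrt k * g t) *
            ((derivWithin g (Icc a b) t) ^ 2 - 1))) ∧
    ((∀ t ∈ Icc a b, 0 ≤ derivWithin H (Icc a b) t) ↔
      (∀ t ∈ Icc a b, derivWithin (derivWithin g (Icc a b)) (Icc a b) t ≥
        Real.sqrt k * (1 - (derivWithin g (Icc a b) t) ^ 2) *
          Real.cot (Real.sqrt k * g t))) := by
  set s := Real.sqrt k with hs
  have hs0 : 0 < s := Real.sqrt_pos.mpr hk
  have hu : UniqueDiffOn ℝ (Icc a b) := uniqueDiffOn_Icc hab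
  set g1 := derivWithin g (Icc a b) with hg1
  set g2 := derivWithin g1 (Icc a b) with hg2
  have hg1C : ContDiffOn ℝ 1 g1 (Icc a b) :=
    hC2.derivWithin hu (by norm_num)
  have hdH : ∀ t ∈ Icc a b, HasDerivWithinAt H
      (Real.cos (s * t) * (Real.sin (s * g t) * g2 t +
        s * Real.cos (s * g t) * ((g1 t) ^ 2 - 1))) (Icc a b) t := by
    intro t ht
    have hg' : HasDerivWithinAt g (g1 t) (Icc a b) t :=
      (hC2.differentiableOn (by norm_num) t ht).hasDerivWithinAt
    have hg'' : HasDerivWithinAt g1 (g2 t) (Icc a b) t :=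
      (hg1C.differentiableOn (by norm_num) t ht).hasDerivWithinAt
    have hlin : HasDerivAt (fun u : ℝ => s * u) s t := by
      simpa using (hasDerivAt_id t).const_mul s
    have h1 : HasDerivWithinAt (fun u => Real.cos (s * u)) (-Real.sin (s * t) * s) (Icc a b) t :=
      ((Real.hasDerivAt_cos (s * t)).comp t hlin).hasDerivWithinAt
    have h4 : HasDerivWithinAt (fun u => Real.sin (s * u)) (Real.cos (s * t) * s) (Icc a b) t :=
      ((Real.hasDerivAt_sin (s * t)).comp t hlin).hasDerivWithinAt
    have h2 : HasDerivWithinAt (fun u => Real.sin (s * g u))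
        (Real.cos (s * g t) * (s * g1 t)) (Icc a b) t :=
      by have := (Real.hasDerivAt_sin (s * g t)).comp_hasDerivWithinAt t (hg'.const_mul s); exact this
    have h3 : HasDerivWithinAt (fun u => Real.cos (s * g u))
        (-Real.sin (s * g t) * (s * g1 t)) (Icc a b) t :=
      by have := (Real.hasDerivAt_cos (s * g t)).comp_hasDerivWithinAt t (hg'.const_mul s); exact this
    have hHfun : H = fun u => g1 u * Real.cos (s * u) * Real.sin (s * g u) -
        Real.sin (s * u) * Real.cos (s * g u) := funext hH
    rw [hHfun]
    have := ((hg''.mul h1).mul h2).sub (h4.mul h3)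
    exact this.congr_deriv (by simp only [Pi.mul_apply]; ring)
  have hderiv : ∀ t ∈ Icc a b, derivWithin H (Icc a b) t =
      Real.cos (s * t) * (Real.sin (s * g t) * g2 t +
        s * Real.cos (s * g t) * ((g1 t) ^ 2 - 1)) :=
    fun t ht => (hdH t ht).derivWithin (hu t ht)
  refine ⟨hderiv, ?_⟩
  have key : ∀ t ∈ Icc a b, (0 < Real.cos (s * t)) ∧ (0 < Real.sin (s * g t)) := by
    intro t ht
    obtain ⟨hta, htb⟩ := ht
    constructor
    · apply Real.cos_pos_of_mem_Ioo
      constructor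
      · have : (0:ℝ) ≤ s * t := mul_nonneg hs0.le (le_trans ha hta)
        linarith [Real.pi_pos]
      · calc s * t ≤ s * b := by nlinarith
          _ < Real.pi / 2 := hb
    · apply Real.sin_pos_of_pos_of_lt_pi
      · exact mul_pos hs0 (hpos t ⟨hta, htb⟩)
      · have := hsmall t ⟨hta, htb⟩
        linarith [Real.pi_pos]
  constructor
  · intro h t ht
    obtain ⟨hcos, hsin⟩ := key t ht
    have hX := h t ht
    rw [hderiv t ht] at hX
    have hX2 : 0 ≤ Real.sin (s * g t) * g2 t +
        s * Real.cos (s * g t) * ((g1 t) ^ 2 - 1) := by nlinarith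
    rw [Real.cot_eq_cos_div_sin, ge_iff_le, ← mul_div_assoc, div_le_iff₀ hsin]
    nlinarith
  · intro h t ht
    obtain ⟨hcos, hsin⟩ := key t ht
    have hcot := h t ht
    rw [Real.cot_eq_cos_div_sin, ge_iff_le, ← mul_div_assoc, div_le_iff₀ hsin] at hcot
    rw [hderiv t ht]
    apply mul_nonneg hcos.le
    nlinarith
end

section
/- Let k < 0, u ∈ ℝ, v > 0, and define g_k : ℝ → ℝ by g_k(t) = (1/√(−k)) · arcosh( ((u² + v²) e^{−√(−k) t} + e^{√(−k) t}) / (2v) ). Then at every t at which ((u² + v²) e^{−√(−k) t} + e^{√(−k) t}) / (2v) > 1, the identity e^{−√(−k) t} ( cosh(√(−k) g_k(t)) + g_k'(t) sinh(√(−k) g_k(t)) ) = 1/v holds. -/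
lemma arcosh_aux (x : ℝ) (hx : 1 ≤ x) :
    Real.cosh (arcosh x) = x ∧ Real.sinh (arcosh x) = Real.sqrt (x ^ 2 - 1) := by
  set y := Real.sqrt (x ^ 2 - 1) with hy
  have hy0 : 0 ≤ y := Real.sqrt_nonneg _
  have hysq : y ^ 2 = x ^ 2 - 1 := Real.sq_sqrt (by nlinarith)
  have hc : 0 < x + y := by nlinarith
  have he : Real.exp (arcosh x) = x + y := Real.exp_log hc
  have hinv : (x + y)⁻¹ = x - y := by
    rw [inv_eq_iff_eq_inv, eq_comm, inv_eq_iff_eq_inv, eq_comm, inv_eq_one_div]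
    field_simp
    nlinarith
  have hne : Real.exp (-(arcosh x)) = x - y := by
    rw [Real.exp_neg, he, hinv]
  constructor
  · rw [Real.cosh_eq, he, hne]; ring
  · rw [Real.sinh_eq, he, hne]; ring

lemma hasDerivAt_arcosh (x : ℝ) (hx : 1 < x) :
    HasDerivAt arcosh (1 / Real.sqrt (x ^ 2 - 1)) x := by
  have hpos : 0 < x ^ 2 - 1 := by nlinarith
  have hy0 : 0 < Real.sqrt (x ^ 2 - 1) := Real.sqrt_pos.mpr hpos
  have hsq : HasDerivAt (fun x : ℝ => Real.sqrt (x ^ 2 - 1))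
      (1 / (2 * Real.sqrt (x ^ 2 - 1)) * (2 * x)) x := by
    have h1 : HasDerivAt (fun x : ℝ => x ^ 2 - 1) (2 * x) x := by
      simpa using (hasDerivAt_pow 2 x).sub_const 1
    exact (Real.hasDerivAt_sqrt (ne_of_gt hpos)).comp x h1
  have hin : HasDerivAt (fun x : ℝ => x + Real.sqrt (x ^ 2 - 1))
      (1 + 1 / (2 * Real.sqrt (x ^ 2 - 1)) * (2 * x)) x :=
    (hasDerivAt_id x).add hsq
  have hc : 0 < x + Real.sqrt (x ^ 2 - 1) := by positivity
  have hlog : HasDerivAt arcosh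
      ((x + Real.sqrt (x ^ 2 - 1))⁻¹ * (1 + 1 / (2 * Real.sqrt (x ^ 2 - 1)) * (2 * x))) x :=
    (Real.hasDerivAt_log (ne_of_gt hc)).comp x hin
  convert hlog using 1
  field_simp
  ring

/-- At every point where the argument of `arcosh` exceeds `1`, the hyperbolic comparison
function satisfies `e^{-√(-k) t} (cosh(√(-k) g_k t) + g_k' t · sinh(√(-k) g_k t)) = 1 / v`. -/
theorem gHyp_first_integral (k u v : ℝ) (hk : k < 0) (hv : 0 < v) (t : ℝ)
    (hgt : 1 < ((u ^ 2 + v ^ 2) * Real.exp (-(Real.sqrt (-k)) * t) +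
      Real.exp (Real.sqrt (-k) * t)) / (2 * v)) :
    Real.exp (-(Real.sqrt (-k)) * t) *
      (Real.cosh (Real.sqrt (-k) * gHyp k u v t) +
        deriv (gHyp k u v) t * Real.sinh (Real.sqrt (-k) * gHyp k u v t)) = 1 / v := by
  set s := Real.sqrt (-k) with hs_def
  have hs : 0 < s := Real.sqrt_pos.mpr (neg_pos.mpr hk)
  set A : ℝ → ℝ := fun t =>
    ((u ^ 2 + v ^ 2) * Real.exp (-s * t) + Real.exp (s * t)) / (2 * v) with hA_def
  have hgt' : 1 < A t := hgt
  have hy0 : 0 < Real.sqrt (A t ^ 2 - 1) := Real.sqrt_pos.mpr (by nlinarith)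
  -- derivative of A
  have h1 : HasDerivAt (fun t : ℝ => -s * t) (-s) t := by
    simpa using (hasDerivAt_id t).const_mul (-s)
  have h2 : HasDerivAt (fun t : ℝ => s * t) s t := by
    simpa using (hasDerivAt_id t).const_mul s
  have hA : HasDerivAt A
      (((u ^ 2 + v ^ 2) * (Real.exp (-s * t) * -s) + Real.exp (s * t) * s) / (2 * v)) t :=
    ((h1.exp.const_mul (u ^ 2 + v ^ 2)).add h2.exp).div_const (2 * v)
  set A' := ((u ^ 2 + v ^ 2) * (Real.exp (-s * t) * -s) + Real.exp (s * t) * s) / (2 * v)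
    with hA'_def
  have hg : HasDerivAt (gHyp k u v) ((1 / s) * (1 / Real.sqrt (A t ^ 2 - 1) * A')) t :=
    ((hasDerivAt_arcosh (A t) hgt').comp t hA).const_mul (1 / s)
  have hgd : deriv (gHyp k u v) t = (1 / s) * (1 / Real.sqrt (A t ^ 2 - 1) * A') :=
    hg.deriv
  have hsg : s * gHyp k u v t = arcosh (A t) := by
    show s * ((1 / s) * arcosh (A t)) = arcosh (A t)
    field_simp
  obtain ⟨hcosh, hsinh⟩ := arcosh_aux (A t) hgt'.le
  rw [hgd, hsg, hcosh, hsinh]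
  have hE : Real.exp (-s * t) * Real.exp (s * t) = 1 := by
    rw [← Real.exp_add]; simp
  have hsne : s ≠ 0 := hs.ne'
  have hvne : v ≠ 0 := hv.ne'
  have hstep : (1 / s) * (1 / Real.sqrt (A t ^ 2 - 1) * A') * Real.sqrt (A t ^ 2 - 1)
      = A' / s := by
    field_simp
  rw [hstep]
  have key : A t + A' / s = Real.exp (s * t) / v := by
    rw [hA'_def, hA_def]
    field_simp
    ring
  rw [key, mul_div_assoc', hE]
end
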